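/- arXiv:1412.1143 — 7 statements merged into one kernel-verified Lean document; each statement's English description precedes it below -/
import Mathlib

section
/- Let v_1,...,v_m ∈ ℝ^d be vectors such that {v_1,...,v_m} contains k pairwise disjoint bases (k ≥ 1). Then for every η > 0 there exists a strongly Rayleigh probability distribution μ on subsets of [m] supported on the bases (i.e. μ(S) > 0 implies S is a basis) such that the marginal probability of each element i ∈ [m] under μ is at most 1/k + η. -/
noncomputable section

open Finset Matrix

/-- A polynomial `p ∈ ℝ[z_1,...,z_m]` is real stable if it has no root
`(z_1,...,z_m) ∈ ℂ^m` with `Im(z_i) > 0` for every `i`. -/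
def RealStable {m : ℕ} (p : MvPolynomial (Fin m) ℝ) : Prop :=
  ∀ z : Fin m → ℂ, (∀ i, 0 < (z i).im) → (MvPolynomial.aeval z) p ≠ 0

/-- The generating polynomial of a distribution on subsets of `[m]`. -/
def genPoly {m : ℕ} (μ : Finset (Fin m) → ℝ) : MvPolynomial (Fin m) ℝ :=
  ∑ S : Finset (Fin m), MvPolynomial.C (μ S) * ∏ i ∈ S, MvPolynomial.X i

/-- `T ⊆ [m]` is a basis for the vectors `v_1,...,v_m ∈ ℝ^d` if `|T| = d` and the vectors
`{v_i : i ∈ T}` are linearly independent. -/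
def IsBasisSet {m d : ℕ} (v : Fin m → Fin d → ℝ) (T : Finset (Fin m)) : Prop :=
  T.card = d ∧ LinearIndependent ℝ (fun i : T => v i)


namespace SRAux

variable {R : Type*} [CommRing R] {d m : ℕ}

/-- The monotone enumeration of a `d`-element subset `S` of `Fin m`. -/
def colSel (S : Finset (Fin m)) (h : S.card = d) : Fin d → Fin m :=
  fun p => ((S.orderIsoOfFin h) p : Fin m)

lemma colSel_injective (S : Finset (Fin m)) (h : S.card = d) :
    Function.Injective (colSel S h) := fun a b hab =>
  (S.orderIsoOfFin h).injective (Subtype.ext hab)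

lemma colSel_mem (S : Finset (Fin m)) (h : S.card = d) (p : Fin d) : colSel S h p ∈ S :=
  ((S.orderIsoOfFin h) p).2

lemma image_colSel (S : Finset (Fin m)) (h : S.card = d) :
    Finset.image (colSel S h) Finset.univ = S := by
  apply Finset.eq_of_subset_of_card_le
  · intro x hx
    simp only [Finset.mem_image] at hx
    obtain ⟨p, -, rfl⟩ := hx
    exact colSel_mem S h p
  · rw [h, Finset.card_image_of_injective _ (colSel_injective S h), Finset.card_univ,
      Fintype.card_fin]

lemma prod_colSel (S : Finset (Fin m)) (h : S.card = d) (w : Fin m → R) :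
    ∏ p : Fin d, w (colSel S h p) = ∏ i ∈ S, w i := by
  conv_rhs => rw [← image_colSel S h]
  rw [Finset.prod_image (fun a _ b _ hab => colSel_injective S h hab)]

/-- The determinant of the `d × d` submatrix of `V` given by the columns in `S`
(`0` if `S` does not have `d` elements). -/
def minorDet (V : Matrix (Fin d) (Fin m) R) (S : Finset (Fin m)) : R :=
  if h : S.card = d then (Matrix.of fun p q => V p (colSel S h q)).det else 0

theorem cauchy_binet (V : Matrix (Fin d) (Fin m) R) (w : Fin m → R) :
    (V * Matrix.diagonal w * Vᵀ).det
      = ∑ S : Finset (Fin m), (∏ i ∈ S, w i) * (minorDet V S) ^ 2 := by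
  classical
  set u : Fin m → (Fin d → R) := fun i q => V q i with hu
  set t : (Fin d → Fin m) → R := fun r =>
    (∏ p : Fin d, (V p (r p) * w (r p))) * Matrix.detRowAlternating (fun p => u (r p)) with ht
  have step1 : (V * Matrix.diagonal w * Vᵀ).det = ∑ r : Fin d → Fin m, t r := by
    have hM : (V * Matrix.diagonal w * Vᵀ)
        = Matrix.of (fun p => ∑ i : Fin m, (V p i * w i) • u i) := by
      have hVD : V * Matrix.diagonal w = Matrix.of (fun p i => V p i * w i) := by
        ext p i
        exact Matrix.mul_diagonal w V p i
      rw [hVD]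
      ext p q
      simp [Matrix.mul_apply, hu, Finset.sum_apply, mul_assoc]
    rw [hM]
    have h0 : Matrix.det (Matrix.of fun p => ∑ i : Fin m, (V p i * w i) • u i)
        = (Matrix.detRowAlternating (R := R) (n := Fin d)).toMultilinearMap
            (fun p => ∑ i : Fin m, (V p i * w i) • u i) := rfl
    rw [h0, MultilinearMap.map_sum]
    refine Finset.sum_congr rfl fun r _ => ?_
    have h1 : (Matrix.detRowAlternating (R := R) (n := Fin d)).toMultilinearMap
        (fun p => (V p (r p) * w (r p)) • u (r p))
        = (∏ p : Fin d, (V p (r p) * w (r p))) • (Matrix.detRowAlternating (R := R) (n := Fin d)).toMultilinearMap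
            (fun p => u (r p)) := MultilinearMap.map_smul_univ _ _ _
    rw [h1, ht, smul_eq_mul]
    rfl
  have step2 : ∑ r : Fin d → Fin m, t r
      = ∑ r ∈ Finset.univ.filter (fun r : Fin d → Fin m => Function.Injective r), t r := by
    symm
    apply Finset.sum_subset (Finset.filter_subset _ _)
    intro r _ hr
    simp only [Finset.mem_filter, Finset.mem_univ, true_and] at hr
    rw [Function.not_injective_iff] at hr
    obtain ⟨a, b, hab, hne⟩ := hr
    have h2 : Matrix.detRowAlternating (fun p => u (r p)) = 0 :=
      (Matrix.detRowAlternating (R := R) (n := Fin d)).map_eq_zero_of_eq _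
        (congrArg u hab) hne
    simp [ht, h2]
  have step3 : ∑ r ∈ Finset.univ.filter (fun r : Fin d → Fin m => Function.Injective r), t r
      = ∑ S : Finset (Fin m),
          ∑ r ∈ (Finset.univ.filter (fun r : Fin d → Fin m => Function.Injective r)).filter
            (fun r => Finset.image r Finset.univ = S), t r :=
    (Finset.sum_fiberwise_of_maps_to (fun r _ => Finset.mem_univ _) t).symm
  rw [step1, step2, step3]
  refine Finset.sum_congr rfl fun S _ => ?_
  by_cases h : S.card = d
  · -- sum over permutations
    have hbij : ∑ σ : Equiv.Perm (Fin d), t (fun p => colSel S h (σ p))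
        = ∑ r ∈ (Finset.univ.filter (fun r : Fin d → Fin m => Function.Injective r)).filter
            (fun r => Finset.image r Finset.univ = S), t r := by
      refine Finset.sum_bij (fun σ _ => fun p => colSel S h (σ p)) ?_ ?_ ?_ ?_
      · intro σ _
        simp only [Finset.mem_filter, Finset.mem_univ, true_and]
        constructor
        · exact fun a b hab => σ.injective (colSel_injective S h hab)
        · have himg : Finset.image σ Finset.univ = Finset.univ :=
            Finset.eq_univ_of_forall (fun x => Finset.mem_image.2 ⟨σ.symm x, Finset.mem_univ _, σ.apply_symm_apply x⟩)
          show Finset.image ((colSel S h) ∘ σ) Finset.univ = S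
          rw [← Finset.image_image, himg, image_colSel]
      · intro σ _ σ' _ hσ
        ext p
        exact congrArg Fin.val (colSel_injective S h (congrFun hσ p))
      · intro r hr
        simp only [Finset.mem_filter, Finset.mem_univ, true_and] at hr
        obtain ⟨hinj, himg⟩ := hr
        have hmem : ∀ p, r p ∈ S := fun p => by
          rw [← himg]; exact Finset.mem_image_of_mem r (Finset.mem_univ p)
        set g : Fin d → Fin d := fun p => (S.orderIsoOfFin h).symm ⟨r p, hmem p⟩ with hg
        have hginj : Function.Injective g := by
          intro a b hab
          apply hinj
          have := congrArg (fun z => ((S.orderIsoOfFin h) z : Fin m)) hab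
          simpa [hg] using this
        have hgbij : Function.Bijective g := (Finite.injective_iff_bijective).1 hginj
        refine ⟨Equiv.ofBijective g hgbij, Finset.mem_univ _, ?_⟩
        funext p
        show colSel S h (g p) = r p
        simp [colSel, hg]
      · intro σ _; rfl
    rw [← hbij]
    set cs : Fin d → Fin m := colSel S h with hcs
    set A : Matrix (Fin d) (Fin d) R := Matrix.of fun p q => V p (cs q) with hA
    have hdetA : minorDet V S = A.det := by rw [minorDet, dif_pos h]
    have hRA : Matrix.detRowAlternating (R := R) (n := Fin d) (fun p => u (cs p)) = A.det := by
      have : (fun p => u (cs p)) = Aᵀ := rfl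
      rw [this]
      show Aᵀ.det = A.det
      exact Matrix.det_transpose A
    have hterm : ∀ σ : Equiv.Perm (Fin d),
        t (fun p => cs (σ p))
          = (∏ i ∈ S, w i) * (((Equiv.Perm.sign σ : ℤ) : R) * (∏ p, A p (σ p)) * A.det) := by
      intro σ
      have e1 : (fun p => u (cs (σ p))) = (fun p => u (cs p)) ∘ σ := rfl
      have e2 : Matrix.detRowAlternating (R := R) (n := Fin d) ((fun p => u (cs p)) ∘ σ)
          = Equiv.Perm.sign σ • Matrix.detRowAlternating (R := R) (n := Fin d) (fun p => u (cs p)) :=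
        AlternatingMap.map_perm _ _ _
      rw [ht]
      simp only [e1, e2, hRA]
      rw [Finset.prod_mul_distrib]
      have e3 : ∏ p : Fin d, w (cs (σ p)) = ∏ i ∈ S, w i := by
        rw [Equiv.prod_comp σ (fun p => w (cs p))]
        exact prod_colSel S h w
      have e4 : ∏ p : Fin d, V p (cs (σ p)) = ∏ p, A p (σ p) := rfl
      rw [e3, e4, Units.smul_def, zsmul_eq_mul]
      ring
    rw [Finset.sum_congr rfl (fun σ _ => hterm σ), ← Finset.mul_sum]
    congr 1
    have hsum : ∑ σ : Equiv.Perm (Fin d), ((Equiv.Perm.sign σ : ℤ) : R) * (∏ p, A p (σ p)) = A.det := by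
      rw [← Matrix.det_transpose A, Matrix.det_apply']
      refine Finset.sum_congr rfl fun σ _ => ?_
      congr 1
    rw [← Finset.sum_mul, hsum, hdetA, sq]
  · have hempty : (Finset.univ.filter (fun r : Fin d → Fin m => Function.Injective r)).filter
        (fun r => Finset.image r Finset.univ = S) = ∅ := by
      rw [Finset.filter_eq_empty_iff]
      intro r hr
      simp only [Finset.mem_filter, Finset.mem_univ, true_and] at hr
      intro hS
      apply h
      rw [← hS, Finset.card_image_of_injective _ hr, Finset.card_univ, Fintype.card_fin]
    rw [hempty]
    simp [minorDet, dif_neg h]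

lemma minorDet_map {d m : ℕ} (V : Matrix (Fin d) (Fin m) ℝ) (S : Finset (Fin m)) :
    minorDet (V.map (algebraMap ℝ ℂ)) S = ((minorDet V S : ℝ) : ℂ) := by
  unfold minorDet
  by_cases h : S.card = d
  · rw [dif_pos h, dif_pos h]
    have : (Matrix.of fun p q => (V.map (algebraMap ℝ ℂ)) p (colSel S h q))
        = (Matrix.of fun p q => V p (colSel S h q)).map (algebraMap ℝ ℂ) := rfl
    rw [this]
    rw [show (Matrix.of fun p q => V p (colSel S h q)).map ⇑(algebraMap ℝ ℂ)
        = (algebraMap ℝ ℂ).mapMatrix (Matrix.of fun p q => V p (colSel S h q)) from rfl,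
      ← RingHom.map_det]
    rfl
  · simp [dif_neg h]

lemma stability {d m : ℕ} (V : Matrix (Fin d) (Fin m) ℝ)
    (hspan : ∀ x : Fin d → ℂ, (∀ i : Fin m, (∑ p, ((V p i : ℝ) : ℂ) * x p) = 0) → x = 0)
    (w : Fin m → ℂ) (hw : ∀ i, 0 < (w i).im) :
    ∑ S : Finset (Fin m), (∏ i ∈ S, w i) * (minorDet (V.map (algebraMap ℝ ℂ)) S) ^ 2 ≠ 0 := by
  rw [← cauchy_binet]
  set Vc := V.map (algebraMap ℝ ℂ) with hVc
  intro hdet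
  obtain ⟨x, hx0, hxv⟩ := (Matrix.exists_mulVec_eq_zero_iff).2 hdet
  apply hx0
  apply hspan
  set c : Fin m → ℂ := fun i => ∑ p, ((V p i : ℝ) : ℂ) * x p with hc
  -- the rows of the product matrix applied to x
  have hmv : ∀ p, (Vc * Matrix.diagonal w * Vcᵀ).mulVec x p
      = ∑ i : Fin m, (Vc p i * w i) * c i := by
    intro p
    have hVD : Vc * Matrix.diagonal w = Matrix.of (fun p i => Vc p i * w i) := by
      ext p i
      exact Matrix.mul_diagonal w Vc p i
    rw [hVD]
    simp only [Matrix.mulVec, dotProduct, Matrix.mul_apply, Matrix.of_apply,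
      Matrix.transpose_apply, Finset.sum_mul]
    rw [Finset.sum_comm]
    refine Finset.sum_congr rfl fun i _ => ?_
    rw [hc]
    simp only [Finset.mul_sum]
    refine Finset.sum_congr rfl fun q _ => ?_
    have : Vc q i = ((V q i : ℝ) : ℂ) := rfl
    rw [this]
    ring
  have hq : ∑ p, (starRingEnd ℂ) (x p) * ((Vc * Matrix.diagonal w * Vcᵀ).mulVec x p) = 0 := by
    rw [hxv]
    simp
  have hq2 : ∑ i : Fin m, w i * ((Complex.normSq (c i) : ℝ) : ℂ) = 0 := by
    rw [← hq]
    have hconj : ∀ i, (starRingEnd ℂ) (c i) = ∑ p, ((V p i : ℝ) : ℂ) * (starRingEnd ℂ) (x p) := by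
      intro i
      rw [hc]
      rw [map_sum]
      refine Finset.sum_congr rfl fun p _ => ?_
      rw [_root_.map_mul, Complex.conj_ofReal]
    calc ∑ i : Fin m, w i * ((Complex.normSq (c i) : ℝ) : ℂ)
        = ∑ i : Fin m, w i * (c i * (starRingEnd ℂ) (c i)) := by
          refine Finset.sum_congr rfl fun i _ => ?_
          rw [Complex.mul_conj]
      _ = ∑ i : Fin m, ∑ p, (starRingEnd ℂ) (x p) * ((Vc p i * w i) * c i) := by
          refine Finset.sum_congr rfl fun i _ => ?_
          rw [hconj i, Finset.mul_sum, Finset.mul_sum]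
          refine Finset.sum_congr rfl fun p _ => ?_
          have : Vc p i = ((V p i : ℝ) : ℂ) := rfl
          rw [this]
          ring
      _ = ∑ p, (starRingEnd ℂ) (x p) * ((Vc * Matrix.diagonal w * Vcᵀ).mulVec x p) := by
          rw [Finset.sum_comm]
          refine Finset.sum_congr rfl fun p _ => ?_
          rw [hmv p, Finset.mul_sum]
  have him : ∑ i : Fin m, (w i).im * Complex.normSq (c i) = 0 := by
    have := congrArg Complex.im hq2
    rw [Complex.im_sum] at this
    simp only [Complex.zero_im] at this
    rw [← this]
    refine Finset.sum_congr rfl fun i _ => ?_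
    rw [Complex.mul_im]
    simp
  intro i
  have hzero : ∀ j ∈ Finset.univ, (0:ℝ) ≤ (w j).im * Complex.normSq (c j) :=
    fun j _ => mul_nonneg (le_of_lt (hw j)) (Complex.normSq_nonneg _)
  have := (Finset.sum_eq_zero_iff_of_nonneg hzero).1 him i (Finset.mem_univ i)
  have hns : Complex.normSq (c i) = 0 := by
    rcases mul_eq_zero.1 this with h | h
    · exact absurd h (ne_of_gt (hw i))
    · exact h
  exact Complex.normSq_eq_zero.1 hns

open Real in
lemma exists_good_weights {m : ℕ} (c : Finset (Fin m) → ℝ) (hc : ∀ S, 0 ≤ c S)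
    (S0 : Finset (Fin m)) (hS0 : 0 < c S0)
    (xs : Fin m → ℝ)
    (hlb : ∃ B : ℝ, ∀ γ : Fin m → ℝ,
      B ≤ Real.log (∑ S : Finset (Fin m), c S * Real.exp (∑ j ∈ S, γ j)) - ∑ j, xs j * γ j)
    (η : ℝ) (hη : 0 < η) :
    ∃ γ : Fin m → ℝ, ∀ i : Fin m,
      (∑ S ∈ Finset.univ.filter (fun S : Finset (Fin m) => i ∈ S), c S * Real.exp (∑ j ∈ S, γ j))
        / (∑ S : Finset (Fin m), c S * Real.exp (∑ j ∈ S, γ j)) ≤ xs i + η := by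
  classical
  obtain ⟨B, hB⟩ := hlb
  set F : (Fin m → ℝ) → ℝ := fun γ => ∑ S : Finset (Fin m), c S * Real.exp (∑ j ∈ S, γ j)
    with hF
  have hFpos : ∀ γ, 0 < F γ := by
    intro γ
    have h1 : c S0 * Real.exp (∑ j ∈ S0, γ j) ≤ F γ :=
      Finset.single_le_sum (f := fun S => c S * Real.exp (∑ j ∈ S, γ j))
        (fun S _ => mul_nonneg (hc S) (Real.exp_nonneg _)) (Finset.mem_univ S0)
    exact lt_of_lt_of_le (mul_pos hS0 (Real.exp_pos _)) h1
  set f : (Fin m → ℝ) → ℝ := fun γ => Real.log (F γ) - ∑ j, xs j * γ j with hf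
  set hfun : (Fin m → ℝ) → ℝ := fun γ => f γ + η * Real.sqrt (1 + ∑ j, (γ j) ^ 2) with hh
  -- continuity
  have hFcont : Continuous F :=
    continuous_finset_sum _ fun S _ => continuous_const.mul
      (Real.continuous_exp.comp (continuous_finset_sum _ fun j _ => continuous_apply j))
  have hcont : Continuous hfun := by
    apply Continuous.add
    · exact (hFcont.log fun γ => (hFpos γ).ne').sub
        (continuous_finset_sum _ fun j _ => continuous_const.mul (continuous_apply j))
    · exact continuous_const.mul (Real.continuous_sqrt.comp
        (continuous_const.add (continuous_finset_sum _ fun j _ => (continuous_apply j).pow 2)))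
  -- norm bound for coercivity
  have hnorm : ∀ γ : Fin m → ℝ, ‖γ‖ ≤ Real.sqrt (1 + ∑ j, (γ j) ^ 2) := by
    intro γ
    rw [pi_norm_le_iff_of_nonneg (Real.sqrt_nonneg _)]
    intro i
    rw [Real.norm_eq_abs, ← Real.sqrt_sq_eq_abs (γ i)]
    apply Real.sqrt_le_sqrt
    have h1 : (γ i) ^ 2 ≤ ∑ j, (γ j) ^ 2 :=
      Finset.single_le_sum (f := fun j => (γ j) ^ 2) (fun j _ => sq_nonneg _) (Finset.mem_univ i)
    linarith
  have hcoer : Filter.Tendsto hfun (Filter.cocompact (Fin m → ℝ)) Filter.atTop := by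
    apply Filter.tendsto_atTop_mono (f := fun γ : Fin m → ℝ => B + η * ‖γ‖)
    · intro γ
      have h1 : η * ‖γ‖ ≤ η * Real.sqrt (1 + ∑ j, (γ j) ^ 2) :=
        mul_le_mul_of_nonneg_left (hnorm γ) hη.le
      have h2 := hB γ
      simp only [hh, hf]
      linarith
    · exact Filter.tendsto_atTop_add_const_left _ B
        (Filter.Tendsto.const_mul_atTop hη tendsto_norm_cocompact_atTop)
  obtain ⟨γ, hγmin⟩ := hcont.exists_forall_le hcoer
  refine ⟨γ, fun i => ?_⟩
  -- one-variable function along coordinate i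
  set A : Finset (Fin m) → ℝ := fun S => ∑ j ∈ S, γ j with hA
  set χ : Finset (Fin m) → ℝ := fun S => if i ∈ S then 1 else 0 with hχ
  set C0 : ℝ := ∑ j, xs j * γ j with hC0
  set Q0 : ℝ := 1 + ∑ j, (γ j) ^ 2 with hQ0
  have hQ0pos : 0 < Q0 := by
    have : (0:ℝ) ≤ ∑ j, (γ j) ^ 2 := Finset.sum_nonneg fun j _ => sq_nonneg _
    simp only [hQ0]; linarith
  set φ : ℝ → ℝ := fun t =>
    Real.log (∑ S : Finset (Fin m), c S * Real.exp (A S + t * χ S)) - (C0 + t * xs i)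
      + η * Real.sqrt (Q0 + (2 * γ i * t + t ^ 2)) with hφ
  have hφeq : ∀ t : ℝ, φ t = hfun (γ + t • (Pi.single i 1 : Fin m → ℝ)) := by
    intro t
    have e1 : ∀ S : Finset (Fin m), (∑ j ∈ S, (γ + t • (Pi.single i 1 : Fin m → ℝ)) j) = A S + t * χ S := by
      intro S
      simp only [Pi.add_apply, Pi.smul_apply, smul_eq_mul]
      rw [Finset.sum_add_distrib, ← Finset.mul_sum]
      congr 1
      rw [hχ]
      congr 1
      simp only [Pi.single_apply]
      exact Finset.sum_ite_eq' S i (fun _ => (1:ℝ))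
    have e2 : (∑ j, xs j * (γ + t • (Pi.single i 1 : Fin m → ℝ)) j) = C0 + t * xs i := by
      simp only [Pi.add_apply, Pi.smul_apply, smul_eq_mul, mul_add]
      rw [Finset.sum_add_distrib]
      congr 1
      have : ∀ j, xs j * (t * (Pi.single i 1 : Fin m → ℝ) j) = if j = i then xs i * t else 0 := by
        intro j
        simp only [Pi.single_apply]
        by_cases hji : j = i
        · subst hji; simp
        · simp [hji]
      rw [Finset.sum_congr rfl fun j _ => this j, Finset.sum_ite_eq' Finset.univ i
        (fun _ => xs i * t)]
      simp [mul_comm]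
    have e3 : (1 + ∑ j, ((γ + t • (Pi.single i 1 : Fin m → ℝ)) j) ^ 2) = Q0 + (2 * γ i * t + t ^ 2) := by
      simp only [Pi.add_apply, Pi.smul_apply, smul_eq_mul]
      have expand : ∀ j, (γ j + t * (Pi.single i 1 : Fin m → ℝ) j) ^ 2
          = (γ j) ^ 2 + (if j = i then 2 * γ i * t + t ^ 2 else 0) := by
        intro j
        simp only [Pi.single_apply]
        by_cases hji : j = i
        · subst hji; simp; ring
        · simp [hji]
      rw [Finset.sum_congr rfl fun j _ => expand j, Finset.sum_add_distrib,
        Finset.sum_ite_eq' Finset.univ i (fun _ => 2 * γ i * t + t ^ 2)]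
      simp only [Finset.mem_univ, if_true, hQ0]
      ring
    simp only [hφ, hh, hf, hF]
    rw [show (∑ S : Finset (Fin m), c S * Real.exp (∑ j ∈ S, (γ + t • (Pi.single i 1 : Fin m → ℝ)) j))
        = ∑ S : Finset (Fin m), c S * Real.exp (A S + t * χ S) from
        Finset.sum_congr rfl fun S _ => by rw [e1 S], e2, e3]
  have hlocmin : IsLocalMin φ 0 := by
    apply Filter.Eventually.of_forall
    intro t
    rw [hφeq t, hφeq 0]
    have : γ + (0:ℝ) • (Pi.single i 1 : Fin m → ℝ) = γ := by simp
    rw [this]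
    exact hγmin _
  -- derivative computation
  set G : ℝ := ∑ S : Finset (Fin m), c S * Real.exp (A S) * χ S with hG
  have hF0 : (∑ S : Finset (Fin m), c S * Real.exp (A S + 0 * χ S)) = F γ := by
    simp [hF, hA]
  have hd1 : HasDerivAt (fun t : ℝ => ∑ S : Finset (Fin m), c S * Real.exp (A S + t * χ S)) G 0 := by
    rw [hG]
    apply HasDerivAt.fun_sum
    intro S _
    have h1 : HasDerivAt (fun t : ℝ => A S + t * χ S) (χ S) 0 := by
      simpa using ((hasDerivAt_id (0:ℝ)).mul_const (χ S)).const_add (A S)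
    have h2 := (h1.exp).const_mul (c S)
    simpa [mul_assoc] using h2
  have hd2 : HasDerivAt (fun t : ℝ => Real.log (∑ S : Finset (Fin m), c S * Real.exp (A S + t * χ S)))
      (G / F γ) 0 := by
    have := hd1.log (by rw [hF0]; exact (hFpos γ).ne')
    rwa [hF0] at this
  have hd3 : HasDerivAt (fun t : ℝ => C0 + t * xs i) (xs i) 0 := by
    simpa using ((hasDerivAt_id (0:ℝ)).mul_const (xs i)).const_add C0
  have hd4 : HasDerivAt (fun t : ℝ => Real.sqrt (Q0 + (2 * γ i * t + t ^ 2)))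
      ((2 * γ i) / (2 * Real.sqrt Q0)) 0 := by
    have hinner : HasDerivAt (fun t : ℝ => Q0 + (2 * γ i * t + t ^ 2)) (2 * γ i) 0 := by
      have ha : HasDerivAt (fun t : ℝ => 2 * γ i * t) (2 * γ i) 0 := by
        simpa using (hasDerivAt_id (0:ℝ)).const_mul (2 * γ i)
      have hb : HasDerivAt (fun t : ℝ => t ^ 2) (0:ℝ) 0 := by
        simpa using hasDerivAt_pow 2 (0:ℝ)
      simpa using (ha.add hb).const_add Q0
    have h0 : (fun t : ℝ => Q0 + (2 * γ i * t + t ^ 2)) 0 ≠ 0 := by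
      simpa using hQ0pos.ne'
    have := hinner.sqrt h0
    simpa using this
  have hdφ : HasDerivAt φ (G / F γ - xs i + η * ((2 * γ i) / (2 * Real.sqrt Q0))) 0 :=
    (hd2.sub hd3).add (hd4.const_mul η)
  have hzero : G / F γ - xs i + η * ((2 * γ i) / (2 * Real.sqrt Q0)) = 0 :=
    hlocmin.hasDerivAt_eq_zero hdφ
  -- conclude
  have hGfilter : (∑ S ∈ Finset.univ.filter (fun S : Finset (Fin m) => i ∈ S),
      c S * Real.exp (∑ j ∈ S, γ j)) = G := by
    rw [hG, Finset.sum_filter]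
    refine Finset.sum_congr rfl fun S _ => ?_
    rw [hχ, hA]
    by_cases hiS : i ∈ S
    · simp [hiS]
    · simp [hiS]
  rw [hGfilter]
  have hsq : 0 < Real.sqrt Q0 := Real.sqrt_pos.2 hQ0pos
  have habs : |γ i| ≤ Real.sqrt Q0 := by
    rw [← Real.sqrt_sq_eq_abs (γ i)]
    apply Real.sqrt_le_sqrt
    have h1 : (γ i) ^ 2 ≤ ∑ j, (γ j) ^ 2 :=
      Finset.single_le_sum (f := fun j => (γ j) ^ 2) (fun j _ => sq_nonneg _) (Finset.mem_univ i)
    simp only [hQ0]; linarith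
  have hratio : |γ i| / Real.sqrt Q0 ≤ 1 := by
    rw [div_le_one hsq]; exact habs
  have h2 : η * ((2 * γ i) / (2 * Real.sqrt Q0)) ≥ -η := by
    have e : (2 * γ i) / (2 * Real.sqrt Q0) = γ i / Real.sqrt Q0 := by
      rw [mul_div_mul_left _ _ (two_ne_zero)]
    rw [e]
    have h3 : -(1:ℝ) ≤ γ i / Real.sqrt Q0 := by
      have h4 : -(|γ i| / Real.sqrt Q0) ≤ γ i / Real.sqrt Q0 := by
        rw [← neg_div]
        gcongr
        exact neg_abs_le (γ i)
      linarith
    nlinarith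
  linarith [hzero, h2]

lemma minorDet_ne_zero_iff {m d : ℕ} (v : Fin m → Fin d → ℝ) (S : Finset (Fin m))
    (h : S.card = d) :
    minorDet (Matrix.of fun p i => v i p) S ≠ 0 ↔ LinearIndependent ℝ (fun i : S => v i) := by
  rw [minorDet, dif_pos h]
  set B : Matrix (Fin d) (Fin d) ℝ :=
    Matrix.of fun p q => (Matrix.of fun p i => v i p) p (colSel S h q) with hB
  have hcols : (fun q : Fin d => Bᵀ q)
      = (fun i : S => v (i : Fin m)) ∘ ⇑((S.orderIsoOfFin h).toEquiv) := rfl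
  constructor
  · intro hne
    have hunit : IsUnit B := (Matrix.isUnit_iff_isUnit_det B).2 (isUnit_iff_ne_zero.2 hne)
    have hli : LinearIndependent ℝ (fun q : Fin d => Bᵀ q) :=
      Matrix.linearIndependent_cols_iff_isUnit.2 hunit
    rw [hcols] at hli
    exact (linearIndependent_equiv ((S.orderIsoOfFin h).toEquiv)).1 hli
  · intro hli
    have hli2 : LinearIndependent ℝ (fun q : Fin d => Bᵀ q) := by
      rw [hcols]
      exact (linearIndependent_equiv ((S.orderIsoOfFin h).toEquiv)).2 hli
    have hunit : IsUnit B := Matrix.linearIndependent_cols_iff_isUnit.1 hli2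
    exact ((Matrix.isUnit_iff_isUnit_det B).1 hunit).ne_zero

lemma span_of_basisSet {m d : ℕ} (v : Fin m → Fin d → ℝ) (T0 : Finset (Fin m))
    (h : T0.card = d) (hli : LinearIndependent ℝ (fun i : T0 => v i)) :
    ∀ x : Fin d → ℂ, (∀ i : Fin m, (∑ p, ((v i p : ℝ) : ℂ) * x p) = 0) → x = 0 := by
  intro x hx
  by_contra hx0
  have hBdet : (Matrix.of fun p q => v (colSel T0 h q) p).det ≠ 0 := by
    have h1 := (minorDet_ne_zero_iff v T0 h).2 hli
    rw [minorDet, dif_pos h] at h1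
    exact h1
  set C : Matrix (Fin d) (Fin d) ℂ :=
    Matrix.of fun q p => ((v (colSel T0 h q) p : ℝ) : ℂ) with hC
  have hCdet : C.det ≠ 0 := by
    have h1 : C = ((algebraMap ℝ ℂ).mapMatrix (Matrix.of fun p q => v (colSel T0 h q) p))ᵀ := rfl
    rw [h1, Matrix.det_transpose, ← RingHom.map_det]
    simp only [Complex.coe_algebraMap]
    exact_mod_cast Complex.ofReal_ne_zero.2 hBdet
  have hmv : C.mulVec x = 0 := by
    funext q
    have h2 := hx (colSel T0 h q)
    simpa [Matrix.mulVec, dotProduct, hC] using h2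
  exact hCdet (Matrix.exists_mulVec_eq_zero_iff.1 ⟨x, hx0, hmv⟩)

lemma aeval_genPoly {m : ℕ} (μ : Finset (Fin m) → ℝ) (z : Fin m → ℂ) :
    (MvPolynomial.aeval z) (genPoly μ) = ∑ S : Finset (Fin m), ((μ S : ℝ) : ℂ) * ∏ i ∈ S, z i := by
  rw [genPoly, map_sum]
  refine Finset.sum_congr rfl fun S _ => ?_
  rw [_root_.map_mul, MvPolynomial.aeval_C, map_prod]
  simp [Complex.coe_algebraMap]

end SRAux

/-- If `v_1,...,v_m` contain `k ≥ 1` pairwise disjoint bases, then for every `η > 0` there is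
a strongly Rayleigh probability distribution supported on the bases whose marginal
probabilities are all at most `1/k + η`. -/
theorem stmt3 {m d k : ℕ} (v : Fin m → Fin d → ℝ) (hk : 1 ≤ k)
    (hdisj : ∃ T : Fin k → Finset (Fin m),
      (∀ a b : Fin k, a ≠ b → Disjoint (T a) (T b)) ∧ ∀ a, IsBasisSet v (T a))
    (η : ℝ) (hη : 0 < η) :
    ∃ μ : Finset (Fin m) → ℝ,
      (∀ S, 0 ≤ μ S) ∧
      (∑ S : Finset (Fin m), μ S = 1) ∧
      RealStable (genPoly μ) ∧
      (∀ S, 0 < μ S → IsBasisSet v S) ∧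
      (∀ i : Fin m,
        ∑ S ∈ Finset.univ.filter (fun S : Finset (Fin m) => i ∈ S), μ S ≤ 1 / (k : ℝ) + η) := by
  classical
  obtain ⟨T, hTdisj, hTbasis⟩ := hdisj
  have hk0 : (0:ℝ) < k := by exact_mod_cast Nat.lt_of_lt_of_le Nat.zero_lt_one hk
  set V : Matrix (Fin d) (Fin m) ℝ := Matrix.of fun p i => v i p with hV
  set c : Finset (Fin m) → ℝ := fun S => (SRAux.minorDet V S) ^ 2 with hc
  have hcnonneg : ∀ S, 0 ≤ c S := fun S => sq_nonneg _
  have hcT : ∀ a : Fin k, 0 < c (T a) := by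
    intro a
    obtain ⟨hcard, hli⟩ := hTbasis a
    have hne := (SRAux.minorDet_ne_zero_iff v (T a) hcard).2 hli
    exact lt_of_le_of_ne (sq_nonneg _) (Ne.symm (pow_ne_zero 2 hne))
  set a0 : Fin k := ⟨0, Nat.lt_of_lt_of_le Nat.zero_lt_one hk⟩ with ha0
  set xs : Fin m → ℝ := fun i => ((Finset.univ.filter fun a : Fin k => i ∈ T a).card : ℝ) / k
    with hxs
  have hxs_le : ∀ i, xs i ≤ 1 / (k:ℝ) := by
    intro i
    have hcard1 : (Finset.univ.filter fun a : Fin k => i ∈ T a).card ≤ 1 := by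
      refine Finset.card_le_one.2 ?_
      intro a ha b hb
      simp only [Finset.mem_filter] at ha hb
      by_contra hab
      exact (Finset.disjoint_left.1 (hTdisj a b hab)) ha.2 hb.2
    have h2 : ((Finset.univ.filter fun a : Fin k => i ∈ T a).card : ℝ) ≤ 1 := by
      exact_mod_cast hcard1
    simp only [hxs]
    gcongr
  have hlb : ∃ B : ℝ, ∀ γ : Fin m → ℝ,
      B ≤ Real.log (∑ S : Finset (Fin m), c S * Real.exp (∑ j ∈ S, γ j))
        - ∑ j, xs j * γ j := by
    refine ⟨(∑ a : Fin k, Real.log (c (T a))) / k, fun γ => ?_⟩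
    have hFpos : 0 < ∑ S : Finset (Fin m), c S * Real.exp (∑ j ∈ S, γ j) :=
      lt_of_lt_of_le (mul_pos (hcT a0) (Real.exp_pos _))
        (Finset.single_le_sum (f := fun S => c S * Real.exp (∑ j ∈ S, γ j))
          (fun S _ => mul_nonneg (hcnonneg S) (Real.exp_pos _).le) (Finset.mem_univ (T a0)))
    have key : ∀ a : Fin k, Real.log (c (T a)) + ∑ j ∈ T a, γ j
        ≤ Real.log (∑ S : Finset (Fin m), c S * Real.exp (∑ j ∈ S, γ j)) := by
      intro a
      have h1 : c (T a) * Real.exp (∑ j ∈ T a, γ j)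
          ≤ ∑ S : Finset (Fin m), c S * Real.exp (∑ j ∈ S, γ j) :=
        Finset.single_le_sum (f := fun S => c S * Real.exp (∑ j ∈ S, γ j))
          (fun S _ => mul_nonneg (hcnonneg S) (Real.exp_pos _).le) (Finset.mem_univ (T a))
      have h2 := (Real.log_le_log_iff (mul_pos (hcT a) (Real.exp_pos _)) hFpos).2 h1
      rwa [Real.log_mul (hcT a).ne' (Real.exp_ne_zero _), Real.log_exp] at h2
    have hsum : (∑ a : Fin k, (Real.log (c (T a)) + ∑ j ∈ T a, γ j))
        ≤ (k:ℝ) * Real.log (∑ S : Finset (Fin m), c S * Real.exp (∑ j ∈ S, γ j)) := by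
      calc (∑ a : Fin k, (Real.log (c (T a)) + ∑ j ∈ T a, γ j))
          ≤ ∑ _a : Fin k, Real.log (∑ S : Finset (Fin m), c S * Real.exp (∑ j ∈ S, γ j)) :=
            Finset.sum_le_sum fun a _ => key a
        _ = (k:ℝ) * Real.log (∑ S : Finset (Fin m), c S * Real.exp (∑ j ∈ S, γ j)) := by
            rw [Finset.sum_const, Finset.card_univ, Fintype.card_fin, nsmul_eq_mul]
    have hcount : (∑ a : Fin k, ∑ j ∈ T a, γ j) = (k:ℝ) * ∑ j, xs j * γ j := by
      have e1 : ∀ a : Fin k, (∑ j ∈ T a, γ j) = ∑ j : Fin m, if j ∈ T a then γ j else 0 := by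
        intro a
        rw [Finset.sum_ite_mem, Finset.univ_inter]
      calc ∑ a : Fin k, ∑ j ∈ T a, γ j
          = ∑ a : Fin k, ∑ j : Fin m, if j ∈ T a then γ j else 0 :=
            Finset.sum_congr rfl fun a _ => e1 a
        _ = ∑ j : Fin m, ∑ a : Fin k, if j ∈ T a then γ j else 0 := Finset.sum_comm
        _ = ∑ j : Fin m, ((Finset.univ.filter fun a : Fin k => j ∈ T a).card : ℝ) * γ j := by
            refine Finset.sum_congr rfl fun j _ => ?_
            rw [← Finset.sum_filter, Finset.sum_const, nsmul_eq_mul]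
        _ = (k:ℝ) * ∑ j, xs j * γ j := by
            rw [Finset.mul_sum]
            refine Finset.sum_congr rfl fun j _ => ?_
            simp only [hxs]
            have hkne : (k:ℝ) ≠ 0 := hk0.ne'
            field_simp
    rw [div_le_iff₀ hk0]
    have expand : (∑ a : Fin k, (Real.log (c (T a)) + ∑ j ∈ T a, γ j))
        = (∑ a : Fin k, Real.log (c (T a))) + ∑ a : Fin k, ∑ j ∈ T a, γ j :=
      Finset.sum_add_distrib
    rw [expand, hcount] at hsum
    rw [sub_mul]
    linarith
  obtain ⟨γ, hγ⟩ := SRAux.exists_good_weights c hcnonneg (T a0) (hcT a0) xs hlb η hη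
  set F : ℝ := ∑ S : Finset (Fin m), c S * Real.exp (∑ j ∈ S, γ j) with hF
  have hFpos : 0 < F :=
    lt_of_lt_of_le (mul_pos (hcT a0) (Real.exp_pos _))
      (Finset.single_le_sum (f := fun S => c S * Real.exp (∑ j ∈ S, γ j))
        (fun S _ => mul_nonneg (hcnonneg S) (Real.exp_pos _).le) (Finset.mem_univ (T a0)))
  set μ : Finset (Fin m) → ℝ := fun S => c S * Real.exp (∑ j ∈ S, γ j) / F with hμ
  refine ⟨μ, ?_, ?_, ?_, ?_, ?_⟩
  · exact fun S => div_nonneg (mul_nonneg (hcnonneg S) (Real.exp_pos _).le) hFpos.le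
  · simp only [hμ]
    rw [← Finset.sum_div, ← hF, div_self hFpos.ne']
  · intro z hz
    rw [SRAux.aeval_genPoly]
    have hw : ∀ i : Fin m, 0 < ((Real.exp (γ i) : ℂ) * z i).im := by
      intro i
      have he : ((Real.exp (γ i) : ℂ) * z i).im = Real.exp (γ i) * (z i).im := by
        rw [Complex.mul_im, Complex.ofReal_re, Complex.ofReal_im]
        ring
      rw [he]
      exact mul_pos (Real.exp_pos _) (hz i)
    have hspan := SRAux.span_of_basisSet v (T a0) (hTbasis a0).1 (hTbasis a0).2
    have hstab := SRAux.stability V hspan (fun i => (Real.exp (γ i) : ℂ) * z i) hw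
    have hsum_eq : (∑ S : Finset (Fin m), ((μ S : ℝ) : ℂ) * ∏ i ∈ S, z i)
        = (∑ S : Finset (Fin m), (∏ i ∈ S, ((Real.exp (γ i) : ℂ) * z i))
            * (SRAux.minorDet (V.map (algebraMap ℝ ℂ)) S) ^ 2) / (F : ℂ) := by
      rw [Finset.sum_div]
      refine Finset.sum_congr rfl fun S _ => ?_
      simp only [hμ, hc]
      rw [Real.exp_sum, SRAux.minorDet_map]
      push_cast
      rw [Finset.prod_mul_distrib]
      ring
    rw [hsum_eq]
    apply div_ne_zero
    · exact hstab
    · exact_mod_cast hFpos.ne'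
  · intro S hS
    have hcS : c S ≠ 0 := by
      intro h0
      have : μ S = 0 := by
        simp only [hμ, h0, zero_mul, zero_div]
      rw [this] at hS
      exact lt_irrefl 0 hS
    have hminor : SRAux.minorDet V S ≠ 0 := by
      intro h0
      apply hcS
      rw [hc]
      simp only [h0]
      ring
    have hcard : S.card = d := by
      by_contra hcard
      exact hminor (by rw [SRAux.minorDet, dif_neg hcard])
    exact ⟨hcard, (SRAux.minorDet_ne_zero_iff v S hcard).1 hminor⟩
  · intro i
    have h1 : (∑ S ∈ Finset.univ.filter (fun S : Finset (Fin m) => i ∈ S), μ S)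
        = (∑ S ∈ Finset.univ.filter (fun S : Finset (Fin m) => i ∈ S),
            c S * Real.exp (∑ j ∈ S, γ j)) / F := by
      rw [Finset.sum_div]
    rw [h1]
    have h2 := hγ i
    have h3 := hxs_le i
    linarith
end
end

section
/- Let v_1,...,v_m ∈ ℝ^d be vectors that contain at least one basis, and let P = conv{1_T : T ⊆ [m] is a basis} ⊆ ℝ^m be the convex hull of the indicator vectors of bases. Then for every point x in the relative interior of P there exist positive weights λ_1,...,λ_m > 0 such that the probability distribution μ_λ on bases defined by μ_λ(T) = det(Σ_{i∈T} λ_i v_i v_iᵀ) / Σ_{T' basis} det(Σ_{i∈T'} λ_i v_i v_iᵀ) satisfies, for every i ∈ [m], Σ_{T basis : i∈T} μ_λ(T) = x(i). -/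
noncomputable section

open scoped Classical
open Matrix Filter
open scoped RealInnerProductSpace

lemma det_lam_smul {m d : ℕ} (v : Fin m → Fin d → ℝ) (T : Finset (Fin m)) (hT : T.card = d)
    (c : Fin m → ℝ) :
    (∑ j ∈ T, c j • Matrix.vecMulVec (v j) (v j)).det
      = (∏ j ∈ T, c j) * (∑ j ∈ T, Matrix.vecMulVec (v j) (v j)).det := by
  classical
  let e : T ≃ Fin d := T.equivFinOfCardEq hT
  let A : Matrix (Fin d) (Fin d) ℝ := fun k i => v (e.symm k) i
  have key : ∀ c : Fin m → ℝ, (∑ j ∈ T, c j • Matrix.vecMulVec (v j) (v j))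
      = Aᵀ * Matrix.diagonal (fun k => c (e.symm k)) * A := by
    intro c
    ext i j
    rw [Matrix.mul_assoc]
    simp only [Matrix.sum_apply, Matrix.smul_apply, Matrix.vecMulVec_apply, smul_eq_mul,
      Matrix.mul_apply, Matrix.transpose_apply, Matrix.diagonal_apply, ite_mul, zero_mul,
      Finset.sum_ite_eq, Finset.mem_univ, if_true]
    rw [← Finset.sum_attach T, ← Finset.univ_eq_attach]
    exact Fintype.sum_equiv e (fun x => c x * (v x i * v x j))
      (fun k => A k i * (c (e.symm k) * A k j)) (fun x => by simp [A]; ring)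
  have h1 := key (fun _ => (1:ℝ))
  simp only [one_smul] at h1
  rw [key c, h1, Matrix.det_mul, Matrix.det_mul, Matrix.det_mul, Matrix.det_mul,
    Matrix.det_diagonal, Matrix.det_diagonal]
  rw [← Finset.prod_attach T c, ← Finset.univ_eq_attach,
    Fintype.prod_equiv e (fun x => c (x:Fin m)) (fun k => c (e.symm k)) (fun x => by simp)]
  simp
  ring

lemma det_pos_of_basis {m d : ℕ} (v : Fin m → Fin d → ℝ) (T : Finset (Fin m))
    (hT : IsBasisSet v T) : 0 < (∑ j ∈ T, Matrix.vecMulVec (v j) (v j)).det := by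
  classical
  obtain ⟨hcard, hli⟩ := hT
  let e : T ≃ Fin d := T.equivFinOfCardEq hcard
  let A : Matrix (Fin d) (Fin d) ℝ := fun k i => v (e.symm k) i
  have key : (∑ j ∈ T, Matrix.vecMulVec (v j) (v j)) = Aᵀ * A := by
    ext i j
    simp only [Matrix.sum_apply, Matrix.vecMulVec_apply,
      Matrix.mul_apply, Matrix.transpose_apply]
    rw [← Finset.sum_attach T, ← Finset.univ_eq_attach]
    exact Fintype.sum_equiv e (fun x => v x i * v x j)
      (fun k => A k i * A k j) (fun x => by simp [A])
  have hA : LinearIndependent ℝ (fun k ↦ A k) := by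
    have := hli.comp e.symm e.symm.injective
    exact this
  have hdet : A.det ≠ 0 := by
    have : IsUnit A := Matrix.linearIndependent_rows_iff_isUnit.mp hA
    simpa [Matrix.isUnit_iff_isUnit_det, isUnit_iff_ne_zero] using this
  rw [key, Matrix.det_mul, Matrix.det_transpose]
  exact mul_self_pos.mpr hdet

local notation "E" m => EuclideanSpace ℝ (Fin m)

lemma cont_sup' {m : ℕ} {ι : Type*} (s : Finset ι) (hs : s.Nonempty) (F : ι → (E m) → ℝ)
    (hF : ∀ i, Continuous (F i)) : Continuous fun u => s.sup' hs (fun i => F i u) := by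
  induction hs using Finset.Nonempty.cons_induction with
  | singleton a => simpa using hF a
  | cons a s ha hs ih =>
    have h : (fun u => (Finset.cons a s ha).sup' (Finset.cons_nonempty ha) fun i => F i u)
        = fun u => max (F a u) (s.sup' hs fun i => F i u) := by
      funext u; rw [Finset.sup'_cons hs]
    rw [h]; exact (hF a).max ih


lemma exists_global_min {F : Type*} [NormedAddCommGroup F] [InnerProductSpace ℝ F]
    [FiniteDimensional ℝ F] (f g : F → ℝ) (V : Submodule ℝ F)
    (hfadd : ∀ θ w, w ∈ V → f (θ + w) = f θ)
    (hgcont : Continuous g) (hfcont : Continuous f) (hg0 : g 0 = 0)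
    (hghom : ∀ t : ℝ, 0 ≤ t → ∀ u, g (t • u) = t * g u)
    (hgpos : ∀ u ∈ Vᗮ, u ≠ 0 → 0 < g u) (C : ℝ)
    (hfC : ∀ u, C + g u ≤ f u) : ∃ u₀, ∀ θ, f u₀ ≤ f θ := by
  by_cases htriv : ∀ u : F, u ∈ Vᗮ → u = 0
  · refine ⟨0, fun θ => ?_⟩
    obtain ⟨y, hy, z, hz, rfl⟩ := V.exists_add_mem_mem_orthogonal θ
    rw [htriv z hz, add_zero, show y = 0 + y from (zero_add y).symm, hfadd 0 y hy]
  · push_neg at htriv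
    obtain ⟨u₁, hu₁o, hu₁0⟩ := htriv
    have hn₁ : ‖u₁‖ ≠ 0 := norm_ne_zero_iff.mpr hu₁0
    set S : Set (↥(Vᗮ)) := Metric.sphere 0 1 with hS
    have hScomp : IsCompact S := isCompact_sphere 0 1
    have hSne : S.Nonempty := by
      refine ⟨⟨‖u₁‖⁻¹ • u₁, Vᗮ.smul_mem _ hu₁o⟩, ?_⟩
      rw [hS, mem_sphere_zero_iff_norm]
      show ‖‖u₁‖⁻¹ • u₁‖ = 1
      rw [norm_smul, norm_inv, norm_norm, inv_mul_cancel₀ hn₁]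
    obtain ⟨w₀, hw₀S, hw₀min⟩ := hScomp.exists_isMinOn hSne
      ((hgcont.comp continuous_subtype_val).continuousOn)
    set ε := g ↑w₀ with hε'
    have hw₀norm : ‖(↑w₀ : F)‖ = 1 := by
      have := hw₀S
      rw [hS, Metric.mem_sphere, dist_zero_right] at this
      exact this
    have hε : 0 < ε := by
      refine hgpos _ w₀.2 ?_
      intro h
      rw [h] at hw₀norm
      simp at hw₀norm
    have hgeps : ∀ u : F, u ∈ Vᗮ → ε * ‖u‖ ≤ g u := by
      intro u hu
      rcases eq_or_ne u 0 with rfl | h0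
      · simp [hg0]
      · have hnorm : ‖u‖ ≠ 0 := norm_ne_zero_iff.mpr h0
        have hw : (⟨‖u‖⁻¹ • u, Vᗮ.smul_mem _ hu⟩ : ↥(Vᗮ)) ∈ S := by
          rw [hS, mem_sphere_zero_iff_norm]
          show ‖‖u‖⁻¹ • u‖ = 1
          rw [norm_smul, norm_inv, norm_norm, inv_mul_cancel₀ hnorm]
        have h1 : ε ≤ g (‖u‖⁻¹ • u) := isMinOn_iff.mp hw₀min _ hw
        have h2 : g u = ‖u‖ * g (‖u‖⁻¹ • u) := by
          rw [← hghom ‖u‖ (norm_nonneg u) (‖u‖⁻¹ • u), smul_smul,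
            mul_inv_cancel₀ hnorm, one_smul]
        rw [h2, mul_comm ε ‖u‖]
        exact mul_le_mul_of_nonneg_left h1 (norm_nonneg u)
    have hFcoer : Filter.Tendsto (fun u : ↥(Vᗮ) => f ↑u) (Filter.cocompact _) Filter.atTop := by
      rw [← Metric.cobounded_eq_cocompact]
      have h1 : Filter.Tendsto (fun u : ↥(Vᗮ) => C + ε * ‖u‖)
          (Bornology.cobounded _) Filter.atTop := by
        apply tendsto_atTop_add_const_left
        exact tendsto_norm_cobounded_atTop.const_mul_atTop hε
      refine tendsto_atTop_mono (fun u => ?_) h1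
      have h2 := hgeps ↑u u.2
      have h3 := hfC ↑u
      have h4 : ‖u‖ = ‖(↑u : F)‖ := rfl
      rw [h4]
      linarith
    obtain ⟨u₀, hu₀⟩ := (hfcont.comp continuous_subtype_val).exists_forall_le hFcoer
    refine ⟨↑u₀, fun θ => ?_⟩
    obtain ⟨y, hy, z, hz, rfl⟩ := V.exists_add_mem_mem_orthogonal θ
    have h5 : f (y + z) = f z := by rw [add_comm]; exact hfadd z y hy
    rw [h5]
    exact hu₀ ⟨z, hz⟩

set_option maxHeartbeats 2000000 in
lemma analysis_min {m : ℕ} (B : Finset (Finset (Fin m))) (hB : B.Nonempty)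
    (a : Finset (Fin m) → ℝ) (ha : ∀ T ∈ B, 0 < a T)
    (c : Finset (Fin m) → ℝ) (hc0 : ∀ T, T ∉ B → c T = 0)
    (hcpos : ∀ T ∈ B, 0 < c T) (hcsum : ∑ T : Finset (Fin m), c T = 1)
    (x : Fin m → ℝ)
    (hxdef : ∀ i, x i = ∑ T ∈ Finset.univ.filter (fun T => i ∈ T), c T) :
    ∃ θ : Fin m → ℝ, ∀ i : Fin m,
      (∑ T ∈ B.filter (fun T => i ∈ T), a T * Real.exp (∑ j ∈ T, θ j)) /
      (∑ T ∈ B, a T * Real.exp (∑ j ∈ T, θ j)) = x i := by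
  classical
  obtain ⟨T₀, hT₀⟩ := hB
  -- basic sums
  have hcB : ∑ T ∈ B, c T = 1 := by
    rw [← hcsum]
    exact Finset.sum_subset (Finset.subset_univ B) (fun T _ hT => hc0 T hT)
  set Z : (E m) → ℝ := fun θ => ∑ T ∈ B, a T * Real.exp (∑ i ∈ T, θ i) with hZ
  have hZpos : ∀ θ : E m, 0 < Z θ := fun θ =>
    Finset.sum_pos (fun T hT => mul_pos (ha T hT) (Real.exp_pos _)) ⟨T₀, hT₀⟩
  set f : (E m) → ℝ := fun θ => Real.log (Z θ) - ∑ i, θ i * x i with hf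
  -- the identity ⟨u, x⟩ = ∑_{T ∈ B} c T * (∑_{i∈T} u i)
  have hux : ∀ u : E m, ∑ i, u i * x i = ∑ T ∈ B, c T * ∑ i ∈ T, u i := by
    intro u
    have h1 : ∑ i, u i * x i = ∑ i, ∑ T ∈ Finset.univ.filter (fun T : Finset (Fin m) => i ∈ T),
        u i * c T := by
      refine Finset.sum_congr rfl fun i _ => ?_
      rw [hxdef i, Finset.mul_sum]
    rw [h1]
    have h2 : ∀ i : Fin m, ∑ T ∈ Finset.univ.filter (fun T : Finset (Fin m) => i ∈ T),
        u i * c T = ∑ T : Finset (Fin m), if i ∈ T then u i * c T else 0 := by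
      intro i; rw [Finset.sum_filter]
    simp_rw [h2]
    rw [Finset.sum_comm]
    have h3 : ∀ T : Finset (Fin m), ∑ i, (if i ∈ T then u i * c T else 0)
        = c T * ∑ i ∈ T, u i := by
      intro T
      rw [Finset.mul_sum, ← Finset.sum_filter]
      rw [Finset.filter_mem_eq_inter, Finset.univ_inter]
      exact Finset.sum_congr rfl fun i _ => mul_comm _ _
    simp_rw [h3]
    exact (Finset.sum_subset (Finset.subset_univ B) (fun T _ hT => by rw [hc0 T hT, zero_mul])).symm
  -- the subspace V
  set V : Submodule ℝ (E m) :=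
    { carrier := {θ : E m | ∀ T ∈ B, ∑ i ∈ T, θ i = ∑ i ∈ T₀, θ i}
      add_mem' := by
        intro θ₁ θ₂ h1 h2 T hT
        simp only [Set.mem_setOf_eq] at h1 h2 ⊢
        simp only [PiLp.add_apply, Finset.sum_add_distrib, h1 T hT, h2 T hT]
      zero_mem' := by simp
      smul_mem' := by
        intro t θ h T hT
        simp only [Set.mem_setOf_eq] at h ⊢
        simp only [PiLp.smul_apply, smul_eq_mul, ← Finset.mul_sum, h T hT] } with hV
  have memV : ∀ θ : E m, θ ∈ V ↔ ∀ T ∈ B, ∑ i ∈ T, θ i = ∑ i ∈ T₀, θ i := fun θ => Iff.rfl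
  -- f is invariant under translation by V
  have hfadd : ∀ (θ w : E m), w ∈ V → f (θ + w) = f θ := by
    intro θ w hw
    have hsum : ∀ T ∈ B, ∑ i ∈ T, (θ + w) i = (∑ i ∈ T, θ i) + ∑ i ∈ T₀, w i := by
      intro T hT
      simp only [PiLp.add_apply, Finset.sum_add_distrib, (memV w).mp hw T hT]
    have hZadd : Z (θ + w) = Real.exp (∑ i ∈ T₀, w i) * Z θ := by
      rw [hZ]
      simp only
      rw [Finset.mul_sum]
      refine Finset.sum_congr rfl fun T hT => ?_
      rw [hsum T hT, Real.exp_add]; ring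
    have hwx : ∑ i, w i * x i = ∑ i ∈ T₀, w i := by
      rw [hux w]
      have : ∀ T ∈ B, c T * ∑ i ∈ T, w i = c T * ∑ i ∈ T₀, w i := by
        intro T hT; rw [(memV w).mp hw T hT]
      rw [Finset.sum_congr rfl this, ← Finset.sum_mul, hcB, one_mul]
    have hθwx : ∑ i, (θ + w) i * x i = (∑ i, θ i * x i) + ∑ i ∈ T₀, w i := by
      rw [← hwx]
      simp only [PiLp.add_apply, add_mul, Finset.sum_add_distrib]
    rw [hf]
    simp only
    rw [hZadd, Real.log_mul (Real.exp_ne_zero _) (ne_of_gt (hZpos θ)), Real.log_exp, hθwx]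
    ring
  -- the gauge g
  set L : Finset (Fin m) → (E m) → ℝ := fun T u => (∑ i ∈ T, u i) - ∑ i, u i * x i with hL
  have hLcont : ∀ T : Finset (Fin m), Continuous (L T) := by
    intro T
    have h1 : ∀ i : Fin m, Continuous fun u : E m => u i := fun i =>
      (EuclideanSpace.proj i (𝕜 := ℝ)).continuous
    exact (continuous_finset_sum T fun i _ => h1 i).sub
      (continuous_finset_sum Finset.univ fun i _ => (h1 i).mul continuous_const)
  set g : (E m) → ℝ := fun u => B.sup' ⟨T₀, hT₀⟩ (fun T => L T u) with hg
  have hgcont : Continuous g := cont_sup' B ⟨T₀, hT₀⟩ L hLcont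
  have hsumL : ∀ u : E m, ∑ T ∈ B, c T * L T u = 0 := by
    intro u
    simp only [hL, mul_sub, Finset.sum_sub_distrib, ← Finset.sum_mul, hcB, one_mul, ← hux u,
      sub_self]
  have hgpos : ∀ u : E m, u ∈ Vᗮ → u ≠ 0 → 0 < g u := by
    intro u huo hu0
    by_contra hle
    push_neg at hle
    have hL0 : ∀ T ∈ B, L T u = 0 := by
      have h1 : ∑ T ∈ B, c T * (- L T u) = 0 := by
        simp only [mul_neg, Finset.sum_neg_distrib, hsumL u, neg_zero]
      have h2 : ∀ T ∈ B, 0 ≤ c T * (- L T u) := by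
        intro T hT
        have := Finset.le_sup' (fun T => L T u) hT
        have hLle : L T u ≤ 0 := le_trans this hle
        exact mul_nonneg (le_of_lt (hcpos T hT)) (neg_nonneg.mpr hLle)
      intro T hT
      have := (Finset.sum_eq_zero_iff_of_nonneg h2).mp h1 T hT
      have hc := hcpos T hT
      have : -L T u = 0 := by
        rcases mul_eq_zero.mp this with h | h
        · exact absurd h (ne_of_gt hc)
        · exact h
      linarith
    have huV : u ∈ V := by
      rw [memV]
      intro T hT
      have h1 := hL0 T hT
      have h2 := hL0 T₀ hT₀
      simp only [hL] at h1 h2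
      linarith
    have : (⟪u, u⟫) = 0 := (Submodule.mem_orthogonal V u).mp huo u huV
    exact hu0 (inner_self_eq_zero.mp this)
  have hghom : ∀ (t : ℝ), 0 ≤ t → ∀ u : E m, g (t • u) = t * g u := by
    intro t ht u
    have hLt : ∀ T, L T (t • u) = t * L T u := by
      intro T
      simp only [hL, PiLp.smul_apply, smul_eq_mul, ← Finset.mul_sum, mul_assoc]
      ring
    simp only [hg, hLt]
    exact (Finset.comp_sup'_eq_sup'_comp ⟨T₀, hT₀⟩ (fun y => t * y)
      (fun y z => by simp [mul_max_of_nonneg _ _ ht])).symm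
  have hg0 : g 0 = 0 := by
    have : ∀ T ∈ B, L T (0 : E m) = 0 := by
      intro T _
      simp [hL]
    simp only [hg]
    rw [Finset.sup'_congr ⟨T₀, hT₀⟩ rfl this, Finset.sup'_const]
  -- lower bound on f
  set C : ℝ := B.inf' ⟨T₀, hT₀⟩ (fun T => Real.log (a T)) with hC
  have hfC : ∀ u : E m, C + g u ≤ f u := by
    intro u
    obtain ⟨T, hT, hgT⟩ := Finset.exists_mem_eq_sup' ⟨T₀, hT₀⟩ (fun T => L T u)
    have h1 : a T * Real.exp (∑ i ∈ T, u i) ≤ Z u :=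
      Finset.single_le_sum (f := fun T' => a T' * Real.exp (∑ i ∈ T', u i))
        (fun T' hT' => le_of_lt (mul_pos (ha T' hT') (Real.exp_pos _))) hT
    have h2 : Real.log (a T * Real.exp (∑ i ∈ T, u i)) ≤ Real.log (Z u) :=
      Real.log_le_log (mul_pos (ha T hT) (Real.exp_pos _)) h1
    rw [Real.log_mul (ne_of_gt (ha T hT)) (Real.exp_ne_zero _), Real.log_exp] at h2
    have h3 : C ≤ Real.log (a T) := Finset.inf'_le _ hT
    have : g u = L T u := hgT
    simp only [hf, this, hL]
    linarith
  -- existence of a global minimizer of f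
  have hfcont : Continuous f := by
    have h1 : ∀ i : Fin m, Continuous fun u : E m => u i := fun i =>
      (EuclideanSpace.proj i (𝕜 := ℝ)).continuous
    have hZcont : Continuous Z :=
      continuous_finset_sum B fun T _ => continuous_const.mul
        ((continuous_finset_sum T fun i _ => h1 i).rexp)
    exact (hZcont.log fun θ => ne_of_gt (hZpos θ)).sub
      (continuous_finset_sum Finset.univ fun i _ => (h1 i).mul continuous_const)
  have hmin : ∃ u₀ : E m, ∀ θ : E m, f u₀ ≤ f θ :=
    exists_global_min f g V hfadd hgcont hfcont hg0 hghom hgpos C hfC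
  obtain ⟨u₀, hu₀⟩ := hmin
  refine ⟨fun j => u₀ j, fun i => ?_⟩
  set A := ∑ T ∈ B.filter (fun T => i ∈ T), a T * Real.exp (∑ j ∈ T, u₀ j) with hA
  set Bc := ∑ T ∈ B.filter (fun T => i ∉ T), a T * Real.exp (∑ j ∈ T, u₀ j) with hBc
  have hsplit : ∀ t : ℝ, Z (u₀ + t • EuclideanSpace.single i (1:ℝ)) = A * Real.exp t + Bc := by
    intro t
    have hcoord : ∀ T : Finset (Fin m), ∑ j ∈ T, (u₀ + t • EuclideanSpace.single i (1:ℝ)) j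
        = (∑ j ∈ T, u₀ j) + (if i ∈ T then t else 0) := by
      intro T
      have h1 : ∀ j, (u₀ + t • EuclideanSpace.single i (1:ℝ)) j
          = u₀ j + (if j = i then t else 0) := by
        intro j
        by_cases h : j = i <;>
          simp [PiLp.add_apply, PiLp.smul_apply, EuclideanSpace.single_apply, h]
      simp_rw [h1]
      rw [Finset.sum_add_distrib, Finset.sum_ite_eq' T i (fun _ => t)]
    rw [hZ]
    simp only
    rw [← Finset.sum_filter_add_sum_filter_not B (fun T => i ∈ T)]
    congr 1
    · rw [hA, Finset.sum_mul]
      refine Finset.sum_congr rfl fun T hT => ?_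
      rw [hcoord T, if_pos (Finset.mem_filter.mp hT).2, Real.exp_add]
      ring
    · refine Finset.sum_congr rfl fun T hT => ?_
      rw [hcoord T, if_neg (Finset.mem_filter.mp hT).2, add_zero]
  have hxcoord : ∀ t : ℝ, ∑ j, (u₀ + t • EuclideanSpace.single i (1:ℝ)) j * x j
      = (∑ j, u₀ j * x j) + t * x i := by
    intro t
    have h1 : ∀ j, (u₀ + t • EuclideanSpace.single i (1:ℝ)) j * x j
        = u₀ j * x j + (if j = i then t * x j else 0) := by
      intro j
      by_cases h : j = i <;>
        simp [PiLp.add_apply, PiLp.smul_apply, EuclideanSpace.single_apply, h] <;> ring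
    simp_rw [h1]
    rw [Finset.sum_add_distrib, Finset.sum_ite_eq' Finset.univ i (fun j => t * x j)]
    simp
  set h : ℝ → ℝ := fun t => Real.log (A * Real.exp t + Bc) - t * x i with hh
  have hfh : ∀ t, f (u₀ + t • EuclideanSpace.single i (1:ℝ)) = h t - ∑ j, u₀ j * x j := by
    intro t
    rw [hf]
    simp only
    rw [hsplit t, hxcoord t, hh]
    ring
  have hABpos : 0 < A * Real.exp 0 + Bc := by
    rw [← hsplit 0]
    exact hZpos _
  have hmin0 : IsLocalMin h 0 := by
    refine Filter.Eventually.of_forall fun t => ?_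
    have h1 := hu₀ (u₀ + t • EuclideanSpace.single i (1:ℝ))
    have h2 : f u₀ = h 0 - ∑ j, u₀ j * x j := by
      have := hfh 0
      simpa using this
    rw [h2, hfh t] at h1
    linarith
  have hder : HasDerivAt h (A * Real.exp 0 / (A * Real.exp 0 + Bc) - x i) 0 := by
    have h1 : HasDerivAt (fun t => A * Real.exp t + Bc) (A * Real.exp 0) 0 :=
      (((Real.hasDerivAt_exp 0).const_mul A).add_const Bc)
    exact (h1.log (ne_of_gt hABpos)).sub (hasDerivAt_mul_const (x i))
  have hzero := hmin0.hasDerivAt_eq_zero hder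
  rw [Real.exp_zero, mul_one] at hzero hABpos
  have hZ0 : (∑ T ∈ B, a T * Real.exp (∑ j ∈ T, u₀ j)) = A + Bc := by
    have h1 := hsplit 0
    rw [Real.exp_zero, mul_one] at h1
    rw [← h1]
    simp [hZ]
  show (∑ T ∈ B.filter (fun T => i ∈ T), a T * Real.exp (∑ j ∈ T, u₀ j)) /
      (∑ T ∈ B, a T * Real.exp (∑ j ∈ T, u₀ j)) = x i
  rw [hZ0, ← hA]
  linarith

/-- For every point `x` in the relative interior of the basis polytope
`P = conv{1_T : T basis}` (equivalently, `x` is a convex combination of the indicator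
vectors of all bases with strictly positive coefficients), there are positive weights
`λ_1,...,λ_m > 0` such that the determinantal distribution
`μ_λ(T) ∝ det(Σ_{i∈T} λ_i v_i v_iᵀ)` on bases has marginal probabilities exactly `x(i)`. -/
theorem stmt4 {m d : ℕ} (v : Fin m → Fin d → ℝ)
    (hbasis : ∃ T : Finset (Fin m), IsBasisSet v T)
    (x : Fin m → ℝ)
    (hx : ∃ c : Finset (Fin m) → ℝ,
      (∀ T, IsBasisSet v T → 0 < c T) ∧
      (∀ T, ¬ IsBasisSet v T → c T = 0) ∧
      (∑ T : Finset (Fin m), c T = 1) ∧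
      (∀ i : Fin m, x i = ∑ T ∈ Finset.univ.filter (fun T : Finset (Fin m) => i ∈ T), c T)) :
    ∃ lam : Fin m → ℝ, (∀ i, 0 < lam i) ∧
      ∀ i : Fin m,
        (∑ T ∈ Finset.univ.filter
            (fun T : Finset (Fin m) => IsBasisSet v T ∧ i ∈ T),
            (∑ j ∈ T, lam j • Matrix.vecMulVec (v j) (v j)).det) /
        (∑ T ∈ Finset.univ.filter (fun T : Finset (Fin m) => IsBasisSet v T),
            (∑ j ∈ T, lam j • Matrix.vecMulVec (v j) (v j)).det)
        = x i := by
  classical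
  obtain ⟨c, hcpos, hc0, hcsum, hxdef⟩ := hx
  set B : Finset (Finset (Fin m)) := Finset.univ.filter (fun T => IsBasisSet v T) with hB
  have hmemB : ∀ T, T ∈ B ↔ IsBasisSet v T := fun T => by simp [hB]
  obtain ⟨T₀, hT₀⟩ := hbasis
  have hBne : B.Nonempty := ⟨T₀, (hmemB T₀).mpr hT₀⟩
  set a : Finset (Fin m) → ℝ := fun T => (∑ j ∈ T, Matrix.vecMulVec (v j) (v j)).det with ha'
  obtain ⟨θ, hθ⟩ := analysis_min B hBne a (fun T hT => det_pos_of_basis v T ((hmemB T).mp hT))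
      c (fun T hT => hc0 T (fun hbad => hT ((hmemB T).mpr hbad)))
      (fun T hT => hcpos T ((hmemB T).mp hT)) hcsum x hxdef
  refine ⟨fun i => Real.exp (θ i), fun i => Real.exp_pos _, fun i => ?_⟩
  have hdet : ∀ T ∈ B, (∑ j ∈ T, Real.exp (θ j) • Matrix.vecMulVec (v j) (v j)).det
      = a T * Real.exp (∑ j ∈ T, θ j) := by
    intro T hT
    rw [det_lam_smul v T ((hmemB T).mp hT).1, ← Real.exp_sum, mul_comm]
  have h1 : Finset.univ.filter (fun T : Finset (Fin m) => IsBasisSet v T ∧ i ∈ T)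
      = B.filter (fun T => i ∈ T) := by
    rw [hB, Finset.filter_filter]
  have hnum : ∑ T ∈ Finset.univ.filter (fun T : Finset (Fin m) => IsBasisSet v T ∧ i ∈ T),
        (∑ j ∈ T, Real.exp (θ j) • Matrix.vecMulVec (v j) (v j)).det
      = ∑ T ∈ B.filter (fun T => i ∈ T), a T * Real.exp (∑ j ∈ T, θ j) := by
    rw [h1]
    exact Finset.sum_congr rfl fun T hT => hdet T (Finset.mem_filter.mp hT).1
  have hden : ∑ T ∈ Finset.univ.filter (fun T : Finset (Fin m) => IsBasisSet v T),
        (∑ j ∈ T, Real.exp (θ j) • Matrix.vecMulVec (v j) (v j)).det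
      = ∑ T ∈ B, a T * Real.exp (∑ j ∈ T, θ j) := by
    rw [← hB]
    exact Finset.sum_congr rfl fun T hT => hdet T hT
  rw [hnum, hden]
  exact hθ i
end
end

section
/- Let v_1,...,v_m ∈ ℝ^d be vectors that contain k pairwise disjoint bases (k ≥ 1), and let P = conv{1_T : T ⊆ [m] is a basis} ⊆ ℝ^m. Then for every η > 0 there exists a point x in the relative interior of P such that x(i) ≤ 1/k + η for every i ∈ [m]. -/
noncomputable section

/-- If `v_1,...,v_m` contain `k ≥ 1` pairwise disjoint bases, then for every `η > 0` there is
a point `x` in the relative interior of the basis polytope `P = conv{1_T : T basis}`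
(equivalently, a convex combination of the indicator vectors of all bases with strictly
positive coefficients) such that `x i ≤ 1/k + η` for every `i`. -/
theorem stmt5 {m d k : ℕ} (v : Fin m → Fin d → ℝ) (hk : 1 ≤ k)
    (hdisj : ∃ T : Fin k → Finset (Fin m),
      (∀ a b : Fin k, a ≠ b → Disjoint (T a) (T b)) ∧ ∀ a, IsBasisSet v (T a))
    (η : ℝ) (hη : 0 < η) :
    ∃ x : Fin m → ℝ,
      (∃ c : Finset (Fin m) → ℝ,
        (∀ T, IsBasisSet v T → 0 < c T) ∧
        (∀ T, ¬ IsBasisSet v T → c T = 0) ∧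
        (∑ T : Finset (Fin m), c T = 1) ∧
        (∀ i : Fin m,
          x i = ∑ T ∈ Finset.univ.filter (fun T : Finset (Fin m) => i ∈ T), c T)) ∧
      ∀ i : Fin m, x i ≤ 1 / (k : ℝ) + η := by
  classical
  obtain ⟨T, hdis, hbas⟩ := hdisj
  set ε : ℝ := min η 1 with hεdef
  have hε0 : 0 < ε := lt_min hη one_pos
  have hε1 : ε ≤ 1 := min_le_right _ _
  have hεη : ε ≤ η := min_le_left _ _
  have hk0 : (0 : ℝ) < (k : ℝ) := by exact_mod_cast hk
  set B : Finset (Finset (Fin m)) := Finset.univ.filter (fun S => IsBasisSet v S) with hB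
  have hTB : T ⟨0, hk⟩ ∈ B := by simp [hB, hbas]
  have hN0 : 0 < (B.card : ℝ) := by
    have : 0 < B.card := Finset.card_pos.mpr ⟨_, hTB⟩
    exact_mod_cast this
  set N : ℝ := (B.card : ℝ) with hNdef
  set cnt : Finset (Fin m) → ℝ :=
    fun S => ((Finset.univ.filter (fun a : Fin k => T a = S)).card : ℝ) with hcnt
  have hcnt0 : ∀ S, 0 ≤ cnt S := fun S => by positivity
  have hcntz : ∀ S, ¬ IsBasisSet v S → cnt S = 0 := by
    intro S hS
    simp only [hcnt, Nat.cast_eq_zero, Finset.card_eq_zero]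
    apply Finset.filter_eq_empty_iff.mpr
    intro a _ haS
    exact hS (haS ▸ hbas a)
  set c : Finset (Fin m) → ℝ :=
    fun S => (if IsBasisSet v S then ε / N else 0) + (1 - ε) / k * cnt S with hc
  refine ⟨fun i => ∑ S ∈ Finset.univ.filter (fun S : Finset (Fin m) => i ∈ S), c S,
    ⟨c, ?_, ?_, ?_, fun i => rfl⟩, ?_⟩
  · intro S hS
    have h1 : 0 < ε / N := div_pos hε0 hN0
    have h2 : 0 ≤ (1 - ε) / k * cnt S := by
      apply mul_nonneg (div_nonneg (by linarith) hk0.le) (hcnt0 S)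
    simp only [hc, if_pos hS]
    linarith
  · intro S hS
    simp [hc, if_neg hS, hcntz S hS]
  · have hsum1 : ∑ S : Finset (Fin m), (if IsBasisSet v S then ε / N else 0) = ε := by
      rw [← Finset.sum_filter]
      simp only [← hB, Finset.sum_const, nsmul_eq_mul, ← hNdef]
      field_simp
    have hsum2 : ∑ S : Finset (Fin m), cnt S = k := by
      simp only [hcnt]
      rw [← Nat.cast_sum]
      norm_cast
      have := Finset.card_eq_sum_card_fiberwise
        (f := T) (s := (Finset.univ : Finset (Fin k)))
        (t := (Finset.univ : Finset (Finset (Fin m)))) (fun a _ => Finset.mem_univ _)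
      simpa [Finset.card_univ] using this.symm
    simp only [hc, Finset.sum_add_distrib, hsum1, ← Finset.mul_sum, hsum2]
    field_simp
    ring
  · intro i
    have hcle : ∀ S, c S ≤ (if IsBasisSet v S then ε / N else 0) + (1 - ε) / k * cnt S :=
      fun S => le_of_eq rfl
    have hbound1 : ∑ S ∈ Finset.univ.filter (fun S : Finset (Fin m) => i ∈ S),
        (if IsBasisSet v S then ε / N else 0) ≤ ε := by
      rw [← Finset.sum_filter, Finset.sum_const, nsmul_eq_mul]
      have hsub : ((Finset.univ.filter (fun S : Finset (Fin m) => i ∈ S)).filter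
          (fun S => IsBasisSet v S)) ⊆ B :=
        Finset.filter_subset_filter _ (Finset.filter_subset _ _)
      have hcard : (((Finset.univ.filter (fun S : Finset (Fin m) => i ∈ S)).filter
          (fun S => IsBasisSet v S)).card : ℝ) ≤ N := by
        rw [hNdef]; exact_mod_cast Finset.card_le_card hsub
      calc _ ≤ N * (ε / N) := by
              apply mul_le_mul_of_nonneg_right hcard (div_nonneg hε0.le hN0.le)
        _ = ε := by field_simp
    have hbound2 : ∑ S ∈ Finset.univ.filter (fun S : Finset (Fin m) => i ∈ S), cnt S ≤ 1 := by
      simp only [hcnt]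
      rw [← Nat.cast_sum]
      have heq : (Finset.univ.filter (fun a : Fin k => i ∈ T a)).card
          = ∑ S ∈ Finset.univ.filter (fun S : Finset (Fin m) => i ∈ S),
            ((Finset.univ.filter (fun a : Fin k => T a = S)).card) := by
        rw [Finset.card_eq_sum_card_fiberwise
          (f := T) (s := Finset.univ.filter (fun a : Fin k => i ∈ T a))
          (t := Finset.univ.filter (fun S : Finset (Fin m) => i ∈ S))
          (fun a ha => by simpa using (Finset.mem_filter.mp ha).2)]
        apply Finset.sum_congr rfl
        intro S hS
        congr 1
        ext a
        simp only [Finset.mem_filter, Finset.mem_univ, true_and]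
        constructor
        · exact fun ⟨_, h⟩ => h
        · intro h
          exact ⟨h ▸ (Finset.mem_filter.mp hS).2, h⟩
      rw [← heq]
      have hle1 : (Finset.univ.filter (fun a : Fin k => i ∈ T a)).card ≤ 1 := by
        apply Finset.card_le_one.mpr
        intro a ha b hb
        by_contra hab
        have := hdis a b hab
        exact (Finset.disjoint_left.mp this (Finset.mem_filter.mp ha).2)
          (Finset.mem_filter.mp hb).2
      exact_mod_cast hle1
    have h2 : ∑ S ∈ Finset.univ.filter (fun S : Finset (Fin m) => i ∈ S),
        (1 - ε) / k * cnt S ≤ (1 - ε) / k := by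
      rw [← Finset.mul_sum]
      calc (1 - ε) / k * ∑ S ∈ Finset.univ.filter (fun S : Finset (Fin m) => i ∈ S), cnt S
          ≤ (1 - ε) / k * 1 :=
            mul_le_mul_of_nonneg_left hbound2 (div_nonneg (by linarith) hk0.le)
        _ = (1 - ε) / k := mul_one _
    have hfin : (1 - ε) / k ≤ 1 / k := by
      exact div_le_div_of_nonneg_right (by linarith) hk0.le |>.trans_eq rfl
    calc ∑ S ∈ Finset.univ.filter (fun S : Finset (Fin m) => i ∈ S), c S
        = ∑ S ∈ Finset.univ.filter (fun S : Finset (Fin m) => i ∈ S),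
            ((if IsBasisSet v S then ε / N else 0) + (1 - ε) / k * cnt S) := rfl
      _ ≤ ε + (1 - ε) / k := by
            rw [Finset.sum_add_distrib]; exact add_le_add hbound1 h2
      _ ≤ 1 / k + η := by
            have := hfin; linarith
end
end

section
/- Let F ⊆ 2^[m] be a nonempty family and let {f_S}_{S∈F} be an interlacing family of real-rooted degree-d polynomials with positive leading coefficients. Then there exists S ∈ F such that the largest real root of f_S is at most the largest real root of f_∅ = Σ_{S∈F} f_S. -/
noncomputable section

/-- Every complex root of `f` is real. -/
def RealRooted (f : Polynomial ℝ) : Prop :=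
  ∀ z : ℂ, (Polynomial.aeval z) f = 0 → z.im = 0

/-- `g` interlaces `f`: `g = α₀·Π_{i=1}^{n}(x−α_i)`, `f = β₀·Π_{i=1}^{n+1}(x−β_i)` with
`β₁ ≤ α₁ ≤ β₂ ≤ α₂ ≤ ... ≤ α_n ≤ β_{n+1}`. -/
def Interlaces (g f : Polynomial ℝ) : Prop :=
  ∃ (n : ℕ) (a b : ℝ) (α : Fin n → ℝ) (β : Fin (n + 1) → ℝ),
    a ≠ 0 ∧ b ≠ 0 ∧
    g = Polynomial.C a * ∏ i, (Polynomial.X - Polynomial.C (α i)) ∧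
    f = Polynomial.C b * ∏ i, (Polynomial.X - Polynomial.C (β i)) ∧
    ∀ i : Fin n, β i.castSucc ≤ α i ∧ α i ≤ β i.succ

/-- Two polynomials have a common interlacing if a single polynomial interlaces both. -/
def CommonInterlacing (f₀ f₁ : Polynomial ℝ) : Prop :=
  ∃ g : Polynomial ℝ, Interlaces g f₀ ∧ Interlaces g f₁

/-- The subfamily `F_{s_1,...,s_k}` of sets agreeing with the pattern `s` on the first `k`
elements. -/
def subFamily {m : ℕ} (F : Finset (Finset (Fin m))) {k : ℕ} (hk : k ≤ m)
    (s : Fin k → Bool) : Finset (Finset (Fin m)) :=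
  F.filter (fun S => ∀ i : Fin k, (Fin.castLE hk i ∈ S ↔ s i = true))

/-- `{f_S}_{S∈F}` is an interlacing family: whenever both `F_{s_1,...,s_k,0}` and
`F_{s_1,...,s_k,1}` are nonempty, the partial sums `f_{s_1,...,s_k,0}` and
`f_{s_1,...,s_k,1}` have a common interlacing. -/
def InterlacingFamily {m : ℕ} (F : Finset (Finset (Fin m)))
    (f : Finset (Fin m) → Polynomial ℝ) : Prop :=
  ∀ (k : ℕ) (hk : k < m) (s : Fin k → Bool),
    (subFamily F (Nat.succ_le_of_lt hk) (Fin.snoc s false)).Nonempty →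
    (subFamily F (Nat.succ_le_of_lt hk) (Fin.snoc s true)).Nonempty →
    CommonInterlacing
      (∑ S ∈ subFamily F (Nat.succ_le_of_lt hk) (Fin.snoc s false), f S)
      (∑ S ∈ subFamily F (Nat.succ_le_of_lt hk) (Fin.snoc s true), f S)

open Polynomial in
lemma fact_eval {N : ℕ} (b x : ℝ) (β : Fin N → ℝ) :
    eval x (C b * ∏ i, (X - C (β i))) = b * ∏ i, (x - β i) := by
  simp [eval_prod]

open Polynomial in
lemma fact_root {N : ℕ} {b x : ℝ} {β : Fin N → ℝ} (hb : b ≠ 0) :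
    (C b * ∏ i, (X - C (β i))).IsRoot x ↔ ∃ i, x = β i := by
  simp only [IsRoot, fact_eval, mul_eq_zero, hb, false_or]
  rw [Finset.prod_eq_zero_iff]
  constructor
  · rintro ⟨i, -, hi⟩; exact ⟨i, by linarith⟩
  · rintro ⟨i, hi⟩; exact ⟨i, Finset.mem_univ i, by linarith⟩

open Polynomial in
lemma fact_leadingCoeff {N : ℕ} (b : ℝ) (β : Fin N → ℝ) :
    (C b * ∏ i, (X - C (β i))).leadingCoeff = b := by
  rw [leadingCoeff_mul, leadingCoeff_C,
    (monic_prod_of_monic _ _ fun i _ => monic_X_sub_C (β i)).leadingCoeff, mul_one]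

open Polynomial in
lemma fact_natDegree {N : ℕ} {b : ℝ} (hb : b ≠ 0) (β : Fin N → ℝ) :
    (C b * ∏ i, (X - C (β i))).natDegree = N := by
  rw [natDegree_C_mul hb, natDegree_prod _ _ fun i _ => X_sub_C_ne_zero (β i)]
  simp

open Polynomial in
lemma keyAux {n : ℕ} {a₀ a₁ b₀ b₁ : ℝ} {α₀ α₁ : Fin n → ℝ} {β₀ β₁ : Fin (n+1) → ℝ}
    {g f₀ f₁ : Polynomial ℝ}
    (ha₀ : a₀ ≠ 0) (hb₀ : 0 < b₀) (hb₁ : 0 < b₁)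
    (hg₀ : g = C a₀ * ∏ i, (X - C (α₀ i)))
    (hg₁ : g = C a₁ * ∏ i, (X - C (α₁ i)))
    (hf₀ : f₀ = C b₀ * ∏ i, (X - C (β₀ i)))
    (hf₁ : f₁ = C b₁ * ∏ i, (X - C (β₁ i)))
    (hi₀ : ∀ i : Fin n, β₀ i.castSucc ≤ α₀ i ∧ α₀ i ≤ β₀ i.succ)
    (hi₁ : ∀ i : Fin n, β₁ i.castSucc ≤ α₁ i ∧ α₁ i ≤ β₁ i.succ)
    (hlast : β₀ (Fin.last n) ≤ β₁ (Fin.last n)) :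
    ∃ y, (f₀ + f₁).IsRoot y ∧ ∀ x, f₀.IsRoot x → x ≤ y := by
  have mono₀ : Monotone β₀ :=
    Fin.monotone_iff_le_succ.2 fun i => le_trans (hi₀ i).1 (hi₀ i).2
  set M := β₀ (Fin.last n) with hM
  have hα₁ : ∀ t : Fin n, α₁ t ≤ M := by
    intro t
    have hroot : g.IsRoot (α₁ t) := by
      rw [hg₁]
      simp only [IsRoot, fact_eval]
      rw [Finset.prod_eq_zero (Finset.mem_univ t) (by ring)]
      ring
    rw [hg₀, fact_root ha₀] at hroot
    obtain ⟨t', ht'⟩ := hroot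
    calc α₁ t = α₀ t' := ht'
    _ ≤ β₀ t'.succ := (hi₀ t').2
    _ ≤ M := mono₀ (Fin.le_last _)
  have hf₁M : eval M f₁ ≤ 0 := by
    rw [hf₁, fact_eval, Fin.prod_univ_castSucc]
    have h1 : 0 ≤ ∏ t : Fin n, (M - β₁ t.castSucc) :=
      Finset.prod_nonneg fun t _ => by
        have := (hi₁ t).1; have := hα₁ t; linarith
    have h2 : M - β₁ (Fin.last n) ≤ 0 := by linarith
    have := mul_nonpos_of_nonneg_of_nonpos h1 h2
    nlinarith
  have hf₀M : eval M f₀ = 0 := by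
    rw [hf₀, fact_eval, Fin.prod_univ_castSucc]
    rw [show M - β₀ (Fin.last n) = 0 by rw [hM]; ring]
    ring
  have hsumM : eval M (f₀ + f₁) ≤ 0 := by
    rw [eval_add, hf₀M]; linarith
  have hdeg₀ : f₀.natDegree = n + 1 := by rw [hf₀]; exact fact_natDegree (ne_of_gt hb₀) β₀
  have hdeg₁ : f₁.natDegree = n + 1 := by rw [hf₁]; exact fact_natDegree (ne_of_gt hb₁) β₁
  have hco₀ : f₀.coeff (n+1) = b₀ := by
    rw [← hdeg₀, coeff_natDegree, hf₀, fact_leadingCoeff]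
  have hco₁ : f₁.coeff (n+1) = b₁ := by
    rw [← hdeg₁, coeff_natDegree, hf₁, fact_leadingCoeff]
  have hcos : (f₀ + f₁).coeff (n+1) = b₀ + b₁ := by rw [coeff_add, hco₀, hco₁]
  have hdegs : (f₀ + f₁).natDegree = n + 1 := by
    refine le_antisymm (le_trans (natDegree_add_le _ _) (by rw [hdeg₀, hdeg₁]; simp)) ?_
    exact le_natDegree_of_ne_zero (by rw [hcos]; positivity)
  have hlc : (f₀ + f₁).leadingCoeff = b₀ + b₁ := by
    rw [leadingCoeff, hdegs, hcos]
  have htend : Filter.Tendsto (fun x => eval x (f₀ + f₁)) Filter.atTop Filter.atTop := by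
    apply Polynomial.tendsto_atTop_of_leadingCoeff_nonneg
    · exact natDegree_pos_iff_degree_pos.1 (by omega)
    · rw [hlc]; positivity
  obtain ⟨N, hN1, hN2⟩ :=
    ((htend.eventually_ge_atTop 0).and (Filter.eventually_ge_atTop M)).exists
  have hIVT := intermediate_value_Icc hN2 ((f₀ + f₁).continuous_aeval.continuousOn)
  obtain ⟨y, hy, hyroot⟩ := hIVT (Set.mem_Icc.2 ⟨hsumM, hN1⟩)
  refine ⟨y, hyroot, ?_⟩
  intro x hx
  rw [hf₀, fact_root (ne_of_gt hb₀)] at hx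
  obtain ⟨j, rfl⟩ := hx
  exact le_trans (mono₀ (Fin.le_last j)) hy.1

open Polynomial in
lemma keyMain {f₀ f₁ : Polynomial ℝ} (h : CommonInterlacing f₀ f₁)
    (h₀ : 0 < f₀.leadingCoeff) (h₁ : 0 < f₁.leadingCoeff) :
    ∃ y, (f₀ + f₁).IsRoot y ∧
      ((∀ x, f₀.IsRoot x → x ≤ y) ∨ (∀ x, f₁.IsRoot x → x ≤ y)) := by
  obtain ⟨g, ⟨n₀, a₀, b₀, α₀, β₀, ha₀, hb₀, hg₀, hf₀, hi₀⟩,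
            ⟨n₁, a₁, b₁, α₁, β₁, ha₁, hb₁, hg₁, hf₁, hi₁⟩⟩ := h
  have hn : n₀ = n₁ := by
    have e0 : g.natDegree = n₀ := by rw [hg₀]; exact fact_natDegree ha₀ α₀
    have e1 : g.natDegree = n₁ := by rw [hg₁]; exact fact_natDegree ha₁ α₁
    omega
  subst hn
  have hb₀' : 0 < b₀ := by rwa [hf₀, fact_leadingCoeff] at h₀
  have hb₁' : 0 < b₁ := by rwa [hf₁, fact_leadingCoeff] at h₁
  rcases le_total (β₀ (Fin.last n₀)) (β₁ (Fin.last n₀)) with hle | hle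
  · obtain ⟨y, hy, hall⟩ := keyAux ha₀ hb₀' hb₁' hg₀ hg₁ hf₀ hf₁ hi₀ hi₁ hle
    exact ⟨y, hy, Or.inl hall⟩
  · obtain ⟨y, hy, hall⟩ := keyAux ha₁ hb₁' hb₀' hg₁ hg₀ hf₁ hf₀ hi₁ hi₀ hle
    rw [add_comm] at hy
    exact ⟨y, hy, Or.inr hall⟩

open Polynomial in
lemma sum_lead {ι : Type*} (E : Finset ι) (hE : E.Nonempty) (f : ι → Polynomial ℝ) (d : ℕ)
    (hdeg : ∀ S ∈ E, (f S).natDegree = d) (hlead : ∀ S ∈ E, 0 < (f S).leadingCoeff) :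
    0 < (∑ S ∈ E, f S).leadingCoeff := by
  have hco : (∑ S ∈ E, f S).coeff d = ∑ S ∈ E, (f S).coeff d := by
    simp [finset_sum_coeff]
  have hpos : 0 < ∑ S ∈ E, (f S).coeff d :=
    Finset.sum_pos (fun S hS => by
      rw [← hdeg S hS, coeff_natDegree]; exact hlead S hS) hE
  have hle : (∑ S ∈ E, f S).natDegree ≤ d :=
    natDegree_sum_le_of_forall_le E f fun S hS => le_of_eq (hdeg S hS)
  have hge : d ≤ (∑ S ∈ E, f S).natDegree :=
    le_natDegree_of_ne_zero (by rw [hco]; exact ne_of_gt hpos)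
  rw [leadingCoeff, le_antisymm hle hge, hco]
  exact hpos

lemma subFamily_snoc {m k : ℕ} (F : Finset (Finset (Fin m))) (hk : k + 1 ≤ m)
    (s : Fin k → Bool) (c : Bool) :
    subFamily F hk (Fin.snoc s c) =
      (subFamily F (Nat.le_of_succ_le hk) s).filter
        (fun S => Fin.castLE hk (Fin.last k) ∈ S ↔ c = true) := by
  ext S
  simp only [subFamily, Finset.mem_filter, and_assoc]
  constructor
  · rintro ⟨hF, h⟩
    refine ⟨hF, fun i => ?_, ?_⟩
    · have := h i.castSucc
      rwa [Fin.snoc_castSucc,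
        show Fin.castLE hk i.castSucc = Fin.castLE (Nat.le_of_succ_le hk) i from rfl] at this
    · have := h (Fin.last k)
      rwa [Fin.snoc_last] at this
  · rintro ⟨hF, h1, h2⟩
    refine ⟨hF, fun i => ?_⟩
    refine Fin.lastCases ?_ ?_ i
    · rwa [Fin.snoc_last]
    · intro j
      rw [Fin.snoc_castSucc,
        show Fin.castLE hk j.castSucc = Fin.castLE (Nat.le_of_succ_le hk) j from rfl]
      exact h1 j

/-- If `{f_S}_{S∈F}` is an interlacing family of real-rooted degree-`d` polynomials with
positive leading coefficients, then some `f_S` has largest root at most the largest root of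
`f_∅ = Σ_{S∈F} f_S`. -/
theorem stmt7 {m d : ℕ} (F : Finset (Finset (Fin m)))
    (hF : F.Nonempty)
    (f : Finset (Fin m) → Polynomial ℝ)
    (hroots : ∀ S ∈ F, RealRooted (f S))
    (hdeg : ∀ S ∈ F, (f S).natDegree = d)
    (hlead : ∀ S ∈ F, 0 < (f S).leadingCoeff)
    (hfam : InterlacingFamily F f) :
    ∃ S ∈ F, ∀ x : ℝ, (f S).IsRoot x →
      ∃ y : ℝ, (∑ T ∈ F, f T).IsRoot y ∧ x ≤ y := by
  classical
  have key : ∀ k, ∀ hk : k ≤ m, ∃ s : Fin k → Bool,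
      (subFamily F hk s).Nonempty ∧
      ∀ x, (∑ S ∈ subFamily F hk s, f S).IsRoot x →
        ∃ y, (∑ T ∈ F, f T).IsRoot y ∧ x ≤ y := by
    intro k
    induction k with
    | zero =>
      intro hk
      have hsub : subFamily F hk (fun _ : Fin 0 => false) = F :=
        Finset.filter_true_of_mem (fun S _ => fun i => i.elim0)
      exact ⟨fun _ => false, by rw [hsub]; exact hF, fun x hx => ⟨x, by rwa [hsub] at hx, le_rfl⟩⟩
    | succ k ih =>
      intro hk
      obtain ⟨s, hne, hprop⟩ := ih (Nat.le_of_succ_le hk)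
      have hsplit : (∑ S ∈ subFamily F hk (Fin.snoc s true), f S) +
          (∑ S ∈ subFamily F hk (Fin.snoc s false), f S) =
          ∑ S ∈ subFamily F (Nat.le_of_succ_le hk) s, f S := by
        rw [subFamily_snoc, subFamily_snoc]
        simpa using Finset.sum_filter_add_sum_filter_not
          (subFamily F (Nat.le_of_succ_le hk) s)
          (fun S => Fin.castLE hk (Fin.last k) ∈ S) f
      by_cases h0 : (subFamily F hk (Fin.snoc s false)).Nonempty
      · by_cases h1 : (subFamily F hk (Fin.snoc s true)).Nonempty
        · have hklt : k < m := hk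
          have hCI := hfam k hklt s h0 h1
          have hsub0 : subFamily F hk (Fin.snoc s false) ⊆ F := Finset.filter_subset _ _
          have hsub1 : subFamily F hk (Fin.snoc s true) ⊆ F := Finset.filter_subset _ _
          have hl0 : 0 < (∑ S ∈ subFamily F hk (Fin.snoc s false), f S).leadingCoeff :=
            sum_lead _ h0 f d (fun S hS => hdeg S (hsub0 hS)) (fun S hS => hlead S (hsub0 hS))
          have hl1 : 0 < (∑ S ∈ subFamily F hk (Fin.snoc s true), f S).leadingCoeff :=
            sum_lead _ h1 f d (fun S hS => hdeg S (hsub1 hS)) (fun S hS => hlead S (hsub1 hS))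
          obtain ⟨y₀, hy₀, hor⟩ := keyMain hCI hl0 hl1
          have hy₀' : (∑ S ∈ subFamily F (Nat.le_of_succ_le hk) s, f S).IsRoot y₀ := by
            rw [← hsplit]
            rwa [add_comm] at hy₀
          obtain ⟨y, hy, hley⟩ := hprop y₀ hy₀'
          rcases hor with hall | hall
          · exact ⟨Fin.snoc s false, h0,
              fun x hx => ⟨y, hy, le_trans (hall x hx) hley⟩⟩
          · exact ⟨Fin.snoc s true, h1,
              fun x hx => ⟨y, hy, le_trans (hall x hx) hley⟩⟩
        · -- true side empty
          have he : subFamily F hk (Fin.snoc s true) = ∅ :=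
            Finset.not_nonempty_iff_eq_empty.1 h1
          have heq : (∑ S ∈ subFamily F hk (Fin.snoc s false), f S) =
              ∑ S ∈ subFamily F (Nat.le_of_succ_le hk) s, f S := by
            rw [← hsplit, he, Finset.sum_empty, zero_add]
          exact ⟨Fin.snoc s false, h0, fun x hx => hprop x (by rwa [heq] at hx)⟩
      · -- false side empty; true side must be nonempty
        have he : subFamily F hk (Fin.snoc s false) = ∅ :=
          Finset.not_nonempty_iff_eq_empty.1 h0
        obtain ⟨S, hS⟩ := hne
        have h1 : (subFamily F hk (Fin.snoc s true)).Nonempty := by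
          by_cases hj : Fin.castLE hk (Fin.last k) ∈ S
          · exact ⟨S, by rw [subFamily_snoc]; exact Finset.mem_filter.2 ⟨hS, by simp [hj]⟩⟩
          · exfalso
            have : S ∈ subFamily F hk (Fin.snoc s false) := by
              rw [subFamily_snoc]; exact Finset.mem_filter.2 ⟨hS, by simp [hj]⟩
            rw [he] at this
            exact absurd this (Finset.notMem_empty S)
        have heq : (∑ S ∈ subFamily F hk (Fin.snoc s true), f S) =
            ∑ S ∈ subFamily F (Nat.le_of_succ_le hk) s, f S := by
          rw [← hsplit, he, Finset.sum_empty, add_zero]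
        exact ⟨Fin.snoc s true, h1, fun x hx => hprop x (by rwa [heq] at hx)⟩
  obtain ⟨s, hne, hprop⟩ := key m le_rfl
  obtain ⟨S, hS⟩ := hne
  have hSF : S ∈ F := (Finset.mem_filter.1 hS).1
  have hsingle : subFamily F le_rfl s = {S} := by
    apply Finset.eq_singleton_iff_unique_mem.2
    refine ⟨hS, fun S' hS' => ?_⟩
    have h1 := (Finset.mem_filter.1 hS).2
    have h2 := (Finset.mem_filter.1 hS').2
    ext i
    exact (h2 i).trans (h1 i).symm
  refine ⟨S, hSF, fun x hx => ?_⟩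
  exact hprop x (by rwa [hsingle, Finset.sum_singleton])
end
end

section
/- If p ∈ ℝ[z_1,...,z_m] is real stable, then so is the polynomial (1 − ∂²_{z_1}) p(z_1,...,z_m) = p − ∂²_{z_1} p; that is, p − ∂²_{z_1} p has no root (z_1,...,z_m) ∈ ℂ^m with Im(z_i) > 0 for every i. -/
noncomputable section

open Polynomial


open Polynomial

-- sum of 1/(w - r) over roots; eval nonzero and ratio formula
lemma multiset_prod_eval_ne_zero (s : Multiset ℂ) (w : ℂ)
    (hs : ∀ r ∈ s, r ≠ w) :
    ((s.map fun r => X - C r).prod).eval w ≠ 0 := by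
  rw [eval_multiset_prod]
  simp only [Multiset.map_map, Function.comp]
  intro h
  rw [Multiset.prod_eq_zero_iff] at h
  simp only [Multiset.mem_map] at h
  obtain ⟨r, hr, hr0⟩ := h
  simp only [eval_sub, eval_X, eval_C, sub_eq_zero] at hr0
  exact hs r hr hr0.symm

lemma deriv_ratio (s : Multiset ℂ) (w : ℂ) (hs : ∀ r ∈ s, r ≠ w) :
    (derivative ((s.map fun r => X - C r).prod)).eval w /
      ((s.map fun r => X - C r).prod).eval w = (s.map fun r => (w - r)⁻¹).sum := by
  induction s using Multiset.induction with
  | empty => simp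
  | cons r s ih =>
    have hr : r ≠ w := hs r (Multiset.mem_cons_self r s)
    have hs' : ∀ x ∈ s, x ≠ w := fun x hx => hs x (Multiset.mem_cons_of_mem hx)
    have hM : ((s.map fun r => X - C r).prod).eval w ≠ 0 := multiset_prod_eval_ne_zero s w hs'
    have hwr : w - r ≠ 0 := sub_ne_zero.mpr (Ne.symm hr)
    rw [Multiset.map_cons, Multiset.map_cons, Multiset.prod_cons, Multiset.sum_cons,
      derivative_mul]
    rw [← ih hs']
    simp only [eval_add, eval_mul, derivative_sub, derivative_X, derivative_C, eval_sub,
      eval_X, eval_C, sub_zero, eval_one]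
    field_simp

lemma multiset_sum_neg (l : Multiset ℝ) (hne : l ≠ 0) (h : ∀ x ∈ l, x < 0) : l.sum < 0 := by
  induction l using Multiset.induction with
  | empty => exact absurd rfl hne
  | cons a t ih =>
    rw [Multiset.sum_cons]
    rcases eq_or_ne t 0 with rfl | ht
    · simpa using h a (Multiset.mem_cons_self a _)
    · have := ih ht (fun x hx => h x (Multiset.mem_cons_of_mem hx))
      have := h a (Multiset.mem_cons_self a t)
      linarith

lemma sum_inv_im_neg (s : Multiset ℂ) (w : ℂ) (hw : 0 < w.im)
    (hs : ∀ r ∈ s, r.im ≤ 0) (hne : s ≠ 0) :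
    ((s.map fun r => (w - r)⁻¹).sum).im < 0 := by
  have : ((s.map fun r => (w - r)⁻¹).sum).im
      = ((s.map fun r => ((w - r)⁻¹).im)).sum := by
    rw [show (fun r => ((w - r)⁻¹).im) = Complex.imAddGroupHom ∘ (fun r : ℂ => (w - r)⁻¹) from rfl,
      ← Multiset.map_map]
    exact map_multiset_sum Complex.imAddGroupHom _
  rw [this]
  have hterm : ∀ x ∈ (s.map fun r => ((w - r)⁻¹).im), x < 0 := by
    intro x hx
    simp only [Multiset.mem_map] at hx
    obtain ⟨r, hr, rfl⟩ := hx
    have him : 0 < (w - r).im := by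
      have := hs r hr; simp [Complex.sub_im]; linarith
    have hne0 : w - r ≠ 0 := fun h => by simp [h] at him
    rw [Complex.inv_im]
    apply div_neg_of_neg_of_pos
    · linarith
    · exact Complex.normSq_pos.mpr hne0
  exact multiset_sum_neg _ (by simpa using hne) hterm

lemma univ_step (q : Polynomial ℂ) (hq : q ≠ 0)
    (h : ∀ w : ℂ, 0 < w.im → q.eval w ≠ 0) (c : ℝ) (w : ℂ) (hw : 0 < w.im) :
    (q + C (c : ℂ) * derivative q).eval w ≠ 0 := by
  have hsplit : q.Splits := IsAlgClosed.splits q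
  have hfact := hsplit.eq_prod_roots
  set s := q.roots with hs
  have hroots_im : ∀ r ∈ s, r.im ≤ 0 := by
    intro r hr
    by_contra hlt
    push_neg at hlt
    exact h r hlt ((mem_roots hq).mp hr)
  have hrne : ∀ r ∈ s, r ≠ w := by
    intro r hr heq
    have := hroots_im r hr
    rw [heq] at this; linarith
  have hM : ((s.map fun r => X - C r).prod).eval w ≠ 0 := multiset_prod_eval_ne_zero s w hrne
  have ha : q.leadingCoeff ≠ 0 := leadingCoeff_ne_zero.mpr hq
  have hqw : q.eval w = q.leadingCoeff * ((s.map fun r => X - C r).prod).eval w := by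
    conv_lhs => rw [hfact]
    simp
  have hq'w : (derivative q).eval w
      = q.leadingCoeff * (derivative ((s.map fun r => X - C r).prod)).eval w := by
    conv_lhs => rw [hfact]
    simp [derivative_C_mul]
  set t : ℂ := (s.map fun r => (w - r)⁻¹).sum with hts
  have hratio : (derivative ((s.map fun r => X - C r).prod)).eval w
      = ((s.map fun r => X - C r).prod).eval w * t := by
    have := deriv_ratio s w hrne
    rw [div_eq_iff hM] at this
    linear_combination this
  rw [eval_add, eval_mul, eval_C, hqw, hq'w, hratio]
  have key : (1 : ℂ) + (c : ℂ) * t ≠ 0 := by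
    rcases eq_or_ne s 0 with hne0 | hne
    · have ht0 : t = 0 := by rw [hts, hne0]; simp
      rw [ht0]; simp
    · have him : t.im < 0 := sum_inv_im_neg s w hw hroots_im hne
      intro habs
      have him0 : (1 + (c : ℂ) * t).im = c * t.im := by
        simp [Complex.add_im, Complex.mul_im]
      rw [habs] at him0
      simp only [Complex.zero_im] at him0
      rcases mul_eq_zero.mp him0.symm with hc | ht
      · rw [hc] at habs
        simp [show ((0:ℝ):ℂ) = 0 from rfl] at habs
      · linarith
  intro habs
  apply key
  have hprod := mul_ne_zero ha hM
  have : q.leadingCoeff * ((s.map fun r => X - C r).prod).eval w * (1 + (c:ℂ) * t) = 0 := by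
    linear_combination habs
  exact (mul_eq_zero.mp this).resolve_left hprod

namespace StableAux

open MvPolynomial

variable {m : ℕ} (i : Fin m) (z : Fin m → ℂ)

def f : MvPolynomial (Fin m) ℝ →ₐ[ℝ] Polynomial ℂ :=
  aeval (fun j => if j = i then Polynomial.X else Polynomial.C (z j))

lemma eval_f (w : ℂ) (p : MvPolynomial (Fin m) ℝ) :
    (f i z p).eval w = aeval (Function.update z i w) p := by
  induction p using MvPolynomial.induction_on with
  | C a => simp [f, algebraMap_eq]
  | add p q hp hq => simp [map_add, hp, hq]
  | mul_X p j hp =>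
    rw [map_mul, Polynomial.eval_mul, hp, map_mul]
    congr 1
    rw [show f i z (MvPolynomial.X j)
        = (if j = i then Polynomial.X else Polynomial.C (z j)) from MvPolynomial.aeval_X _ j]
    rcases eq_or_ne j i with rfl | hne
    · simp
    · simp [if_neg hne, Function.update_of_ne hne]

lemma deriv_f (p : MvPolynomial (Fin m) ℝ) :
    Polynomial.derivative (f i z p) = f i z (pderiv i p) := by
  induction p using MvPolynomial.induction_on with
  | C a =>
    simp [f, algebraMap_eq, pderiv_C]
  | add p q hp hq => simp [map_add, hp, hq]
  | mul_X p j hp =>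
    rw [pderiv_mul, map_mul, Polynomial.derivative_mul, hp, map_add, map_mul]
    have hx : f i z (MvPolynomial.X j)
        = (if j = i then Polynomial.X else Polynomial.C (z j)) := MvPolynomial.aeval_X _ j
    rcases eq_or_ne j i with rfl | hne
    · rw [hx, if_pos rfl, pderiv_X_self, mul_one]; simp
    · rw [hx, if_neg hne, pderiv_X_of_ne hne, mul_zero]; simp

lemma step (p : MvPolynomial (Fin m) ℝ) (hp : RealStable p) (c : ℝ) :
    RealStable (p + MvPolynomial.C c * pderiv i p) := by
  intro z hz
  set q := f i z p with hqdef
  have hupd : ∀ w : ℂ, 0 < w.im → ∀ j, 0 < ((Function.update z i w) j).im := by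
    intro w hw j
    rcases eq_or_ne j i with rfl | hne
    · simp [Function.update_self, hw]
    · simp [Function.update_of_ne hne, hz j]
  have hq : ∀ w : ℂ, 0 < w.im → q.eval w ≠ 0 := by
    intro w hw
    rw [hqdef, eval_f]
    exact hp _ (hupd w hw)
  have hq0 : q ≠ 0 := by
    intro h0
    have := hq (z i) (hz i)
    rw [h0] at this
    simp at this
  have key := univ_step q hq0 hq c (z i) (hz i)
  intro habs
  apply key
  rw [← habs]
  have heq : (MvPolynomial.aeval z) (p + MvPolynomial.C c * pderiv i p)
      = (q + Polynomial.C (c:ℂ) * Polynomial.derivative q).eval (z i) := by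
    rw [Polynomial.eval_add, Polynomial.eval_mul, Polynomial.eval_C, hqdef, deriv_f,
      eval_f, eval_f, Function.update_eq_self, map_add, map_mul]
    congr 1
    rw [show ((MvPolynomial.aeval z) (MvPolynomial.C c) : ℂ)
        = (c : ℂ) from MvPolynomial.aeval_C _ c]
  rw [heq]

end StableAux

/-- If `p` is real stable, then so is `p − ∂²_{z_i} p`. -/
theorem stmt8 {m : ℕ} (p : MvPolynomial (Fin m) ℝ) (hp : RealStable p) (i : Fin m) :
    RealStable (p - MvPolynomial.pderiv i (MvPolynomial.pderiv i p)) := by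
  have h1 := StableAux.step i p hp 1
  have h2 := StableAux.step i _ h1 (-1)
  have heq : p + MvPolynomial.C 1 * MvPolynomial.pderiv i p
      + MvPolynomial.C (-1) *
        MvPolynomial.pderiv i (p + MvPolynomial.C 1 * MvPolynomial.pderiv i p)
      = p - MvPolynomial.pderiv i (MvPolynomial.pderiv i p) := by
    rw [map_add, MvPolynomial.pderiv_C_mul]
    simp only [map_one, one_mul, map_neg, MvPolynomial.C_1]
    ring
  rwa [heq] at h2
end
end

section
/- Let p ∈ ℝ[z_1,...,z_m] be real stable and let z ∈ ℝ^m be above all roots of p. Then for every i ≤ m, Ψ^i_p(z) ≤ (Φ^i_p(z))². -/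
noncomputable section

/-- `z ∈ ℝ^m` is above all roots of `p` if `p(z + t) > 0` for every `t ≥ 0`. -/
def AboveRoots {m : ℕ} (p : MvPolynomial (Fin m) ℝ) (z : Fin m → ℝ) : Prop :=
  ∀ t : Fin m → ℝ, (∀ i, 0 ≤ t i) → 0 < MvPolynomial.eval (z + t) p

/-- The barrier function `Φ^i_p(z) = (∂_{z_i} p)(z) / p(z)`. -/
def Phi {m : ℕ} (p : MvPolynomial (Fin m) ℝ) (i : Fin m) (z : Fin m → ℝ) : ℝ :=
  MvPolynomial.eval z (MvPolynomial.pderiv i p) / MvPolynomial.eval z p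

/-- The second-order barrier function `Ψ^i_p(z) = (∂²_{z_i} p)(z) / p(z)`. -/
def Psi {m : ℕ} (p : MvPolynomial (Fin m) ℝ) (i : Fin m) (z : Fin m → ℝ) : ℝ :=
  MvPolynomial.eval z (MvPolynomial.pderiv i (MvPolynomial.pderiv i p)) /
    MvPolynomial.eval z p

namespace Stmt15Aux

open Polynomial

lemma multiset_prod_le_prod (s : Multiset ℂ) (g₁ g₂ : ℂ → ℝ)
    (h : ∀ r ∈ s, 0 ≤ g₁ r ∧ g₁ r ≤ g₂ r) :
    (s.map g₁).prod ≤ (s.map g₂).prod := by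
  induction s using Multiset.induction_on with
  | empty => simp
  | cons a s ih =>
    simp only [Multiset.map_cons, Multiset.prod_cons]
    have ha := h a (Multiset.mem_cons_self a s)
    have hs : ∀ r ∈ s, 0 ≤ g₁ r ∧ g₁ r ≤ g₂ r := fun r hr => h r (Multiset.mem_cons_of_mem hr)
    have h1 : 0 ≤ (s.map g₁).prod := Multiset.prod_nonneg (by
      intro x hx; obtain ⟨r, hr, rfl⟩ := Multiset.mem_map.mp hx; exact (hs r hr).1)
    exact mul_le_mul ha.2 (ih hs) h1 (le_trans ha.1 ha.2)

lemma abs_eval_mono {f : Polynomial ℂ} (hf : ∀ w : ℂ, 0 < w.im → f.eval w ≠ 0)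
    {x y₁ y₂ : ℝ} (h0 : 0 ≤ y₂) (h12 : y₂ ≤ y₁) :
    ‖f.eval (x + y₂ * Complex.I)‖ ≤ ‖f.eval (x + y₁ * Complex.I)‖ := by
  by_cases hf0 : f = 0
  · simp [hf0]
  have hsplit : f.Splits := IsAlgClosed.splits f
  have hfac := hsplit.eq_prod_roots
  have hroot : ∀ r ∈ f.roots, r.im ≤ 0 := by
    intro r hr
    by_contra h
    exact hf r (lt_of_not_ge h) ((Polynomial.mem_roots hf0).mp hr)
  have key : ∀ y : ℝ, ‖f.eval (x + y * Complex.I)‖ =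
      ‖f.leadingCoeff‖ *
        ((f.roots.map (fun r => ‖x + y * Complex.I - r‖)).prod) := by
    intro y
    conv_lhs => rw [hfac]
    rw [Polynomial.eval_mul, Polynomial.eval_C, norm_mul, Polynomial.eval_multiset_prod,
      Multiset.map_map, show ∀ s : Multiset ℂ, ‖s.prod‖ = (s.map (‖·‖)).prod from
        fun s => map_multiset_prod (normHom : ℂ →*₀ ℝ) s, Multiset.map_map]
    simp
  rw [key y₂, key y₁]
  apply mul_le_mul_of_nonneg_left _ (norm_nonneg _)
  apply multiset_prod_le_prod
  intro r hr
  refine ⟨norm_nonneg _, ?_⟩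
  have him := hroot r hr
  have h1 : ‖x + y₂ * Complex.I - r‖ ^ 2 ≤ ‖x + y₁ * Complex.I - r‖ ^ 2 := by
    rw [Complex.sq_norm, Complex.sq_norm, Complex.normSq_apply, Complex.normSq_apply]
    simp only [Complex.sub_re, Complex.add_re, Complex.ofReal_re, Complex.mul_re,
      Complex.ofReal_im, Complex.I_re, Complex.I_im, Complex.sub_im, Complex.add_im,
      Complex.mul_im]
    nlinarith [him, h0, h12]
  exact (pow_le_pow_iff_left₀ (norm_nonneg _) (norm_nonneg _)
    (by norm_num)).mp h1

variable {m : ℕ}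

/-- substitution of `X` for the `i`-th variable and `v j` for the others -/
def subst {S : Type*} [CommRing S] [Algebra ℝ S] (i : Fin m) (v : Fin m → S) :
    MvPolynomial (Fin m) ℝ →ₐ[ℝ] Polynomial S :=
  MvPolynomial.aeval fun j => if j = i then Polynomial.X else Polynomial.C (v j)

lemma subst_eval {S : Type*} [CommRing S] [Algebra ℝ S] (i : Fin m) (v : Fin m → S) (w : S)
    (p : MvPolynomial (Fin m) ℝ) :
    Polynomial.eval w (subst i v p) =
      (MvPolynomial.aeval fun j => if j = i then w else v j) p := by
  have h := MvPolynomial.comp_aeval (R := ℝ)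
    (f := fun j => if j = i then Polynomial.X else Polynomial.C (v j))
    (φ := (Polynomial.aeval w : Polynomial S →ₐ[S] S).restrictScalars ℝ)
  have h2 := AlgHom.congr_fun h p
  simp only [AlgHom.coe_comp, Function.comp_apply, AlgHom.coe_restrictScalars] at h2
  have hfun : (fun j => (AlgHom.restrictScalars ℝ (Polynomial.aeval w : Polynomial S →ₐ[S] S))
      (if j = i then Polynomial.X else Polynomial.C (v j))) =
      fun j => if j = i then w else v j := by
    funext j; by_cases hj : j = i <;> simp [hj]
  rw [hfun] at h2
  rw [subst, ← h2, ← Polynomial.coe_aeval_eq_eval]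
  rfl

lemma subst_map (i : Fin m) (v : Fin m → ℝ) (p : MvPolynomial (Fin m) ℝ) :
    (subst i v p).map (algebraMap ℝ ℂ) = subst i (fun j => (v j : ℂ)) p := by
  have h := MvPolynomial.comp_aeval (R := ℝ)
    (f := fun j => if j = i then Polynomial.X else Polynomial.C (v j))
    (φ := Polynomial.mapAlgHom (Algebra.ofId ℝ ℂ))
  have h2 := AlgHom.congr_fun h p
  simp only [AlgHom.coe_comp, Function.comp_apply] at h2
  have hfun : (fun j => (Polynomial.mapAlgHom (Algebra.ofId ℝ ℂ))
      (if j = i then Polynomial.X else Polynomial.C (v j))) =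
      fun j => if j = i then Polynomial.X else Polynomial.C ((v j : ℂ)) := by
    funext j; by_cases hj : j = i <;> simp [hj, Polynomial.mapAlgHom, Algebra.ofId]
  rw [hfun] at h2
  rw [subst, subst, ← h2]
  rfl

lemma aeval_real (z : Fin m → ℝ) (p : MvPolynomial (Fin m) ℝ) :
    (MvPolynomial.aeval z) p = MvPolynomial.eval z p := by
  rw [← MvPolynomial.coe_aeval_eq_eval]; rfl

lemma subst_derivative (i : Fin m) (v : Fin m → ℝ) (p : MvPolynomial (Fin m) ℝ) :
    Polynomial.derivative (subst i v p) = subst i v (MvPolynomial.pderiv i p) := by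
  induction p using MvPolynomial.induction_on with
  | C a => simp [subst]
  | add p q hp hq => simp only [map_add, hp, hq]
  | mul_X p n hp =>
    rw [map_mul, Polynomial.derivative_mul, hp,
      (MvPolynomial.pderiv i).leibniz p (MvPolynomial.X n), map_add, smul_eq_mul, smul_eq_mul,
      map_mul, map_mul]
    by_cases hn : n = i
    · subst hn
      rw [MvPolynomial.pderiv_X_self, map_one]
      simp only [subst, MvPolynomial.aeval_X, eq_self_iff_true, if_true,
        Polynomial.derivative_X, mul_one]
      ring
    · rw [MvPolynomial.pderiv_X_of_ne hn, map_zero]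
      simp only [subst, MvPolynomial.aeval_X, if_neg hn, Polynomial.derivative_C]
      ring

lemma cont_aeval (p : MvPolynomial (Fin m) ℝ) (v : ℝ → Fin m → ℂ)
    (hv : ∀ j, Continuous fun ε => v ε j) :
    Continuous fun ε => (MvPolynomial.aeval (v ε)) p := by
  induction p using MvPolynomial.induction_on with
  | C a => simpa [MvPolynomial.aeval_C] using continuous_const
  | add p q hp hq => simp only [map_add]; exact hp.add hq
  | mul_X p n hp => simp only [map_mul, MvPolynomial.aeval_X]; exact hp.mul (hv n)

lemma key_ineq (t₀ : ℝ) (s : Multiset ℝ) (hs : ∀ r ∈ s, r < t₀) :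
    0 < ((s.map fun r => (X : ℝ[X]) - C r).prod).eval t₀ ∧
    ((s.map fun r => (X : ℝ[X]) - C r).prod).eval t₀ *
        (derivative (derivative (s.map fun r => (X : ℝ[X]) - C r).prod)).eval t₀ ≤
      ((derivative ((s.map fun r => (X : ℝ[X]) - C r).prod)).eval t₀) ^ 2 := by
  induction s using Multiset.induction_on with
  | empty => simp
  | cons a s ih =>
    obtain ⟨h1, h2⟩ := ih fun r hr => hs r (Multiset.mem_cons_of_mem hr)
    have ha : a < t₀ := hs a (Multiset.mem_cons_self a s)
    set g := (s.map fun r => (X : ℝ[X]) - C r).prod with hg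
    have hprod : ((a ::ₘ s).map fun r => (X : ℝ[X]) - C r).prod = ((X : ℝ[X]) - C a) * g := by
      rw [Multiset.map_cons, Multiset.prod_cons]
    rw [hprod]
    have hd1 : derivative (((X : ℝ[X]) - C a) * g) = g + ((X : ℝ[X]) - C a) * derivative g := by
      rw [derivative_mul]; simp
    have hd2 : derivative (derivative (((X : ℝ[X]) - C a) * g)) =
        2 * derivative g + ((X : ℝ[X]) - C a) * derivative (derivative g) := by
      rw [hd1, map_add, derivative_mul]; simp; ring
    rw [hd1] at hd2 ⊢
    rw [hd2]
    set A := g.eval t₀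
    set B := (derivative g).eval t₀
    set Cc := (derivative (derivative g)).eval t₀
    have hu : 0 < t₀ - a := by linarith
    constructor
    · simp only [eval_mul, eval_sub, eval_X, eval_C]
      positivity
    · simp only [eval_mul, eval_add, eval_sub, eval_X, eval_C, eval_ofNat]
      nlinarith [sq_nonneg A, sq_nonneg ((t₀ - a) * B), mul_pos hu h1, sq_nonneg (t₀ - a)]

end Stmt15Aux

set_option maxHeartbeats 2000000 in
open Polynomial Stmt15Aux in
/-- If `p` is real stable and `z` is above all roots of `p`, then
`Ψ^i_p(z) ≤ (Φ^i_p(z))²` for every `i`. -/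
theorem stmt15 {m : ℕ} (p : MvPolynomial (Fin m) ℝ) (hp : RealStable p)
    (z : Fin m → ℝ) (hz : AboveRoots p z) :
    ∀ i : Fin m, Psi p i z ≤ (Phi p i z) ^ 2 := by
  intro i
  set t₀ := z i with ht₀
  set qR : ℝ[X] := subst i z p with hqR
  have hzz : (fun j => if j = i then z i else z j) = z := by
    funext j; by_cases hj : j = i <;> simp [hj]
  have hA : 0 < MvPolynomial.eval z p := by
    have := hz 0 (fun j => le_refl 0)
    simpa using this
  -- evaluation of qR
  have heval : ∀ b : ℝ, qR.eval b =
      MvPolynomial.eval (fun j => if j = i then b else z j) p := by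
    intro b
    rw [hqR, subst_eval, aeval_real]
  have hpos : ∀ b : ℝ, t₀ ≤ b → 0 < qR.eval b := by
    intro b hb
    rw [heval]
    have h := hz (fun j => if j = i then b - z i else 0)
      (fun j => by by_cases hj : j = i <;> simp [hj] ; linarith)
    have harg : (z + fun j => if j = i then b - z i else 0) =
        fun j => if j = i then b else z j := by
      funext j; by_cases hj : j = i <;> simp [hj, Pi.add_apply] <;> ring
    rwa [harg] at h
  have hqR_t₀ : qR.eval t₀ = MvPolynomial.eval z p := by rw [heval, hzz]
  have hqRne : qR ≠ 0 := by
    intro h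
    have := hpos t₀ le_rfl
    rw [h] at this; simp at this
  -- complex side
  set qC : ℂ[X] := qR.map (algebraMap ℝ ℂ) with hqC
  have hqCne : qC ≠ 0 := Polynomial.map_ne_zero hqRne
  have hQCsubst : qC = subst i (fun j => (z j : ℂ)) p := by rw [hqC, hqR, subst_map]
  -- the perturbed polynomials
  set Q : ℝ → ℂ[X] := fun ε => subst i (fun j => (z j : ℂ) + (ε : ℂ) * Complex.I) p with hQ
  have hQ0 : Q 0 = qC := by
    have hv : (fun j => (z j : ℂ) + (((0:ℝ) : ℂ)) * Complex.I) = fun j => (z j : ℂ) := by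
      funext j; norm_num
    simp only [hQ]
    rw [hv, hQCsubst]
  have hQeval : ∀ (ε : ℝ) (b : ℂ), (Q ε).eval b =
      (MvPolynomial.aeval fun j => if j = i then b else (z j : ℂ) + (ε : ℂ) * Complex.I) p := by
    intro ε b
    rw [hQ, subst_eval]
  have hstable : ∀ ε : ℝ, 0 < ε → ∀ w : ℂ, 0 < w.im → (Q ε).eval w ≠ 0 := by
    intro ε hε w hw
    rw [hQeval]
    apply hp
    intro j
    by_cases hj : j = i
    · simpa [hj] using hw
    · simp [hj, hε]
  have hcont : ∀ b : ℂ, Continuous fun ε : ℝ => (Q ε).eval b := by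
    intro b
    simp only [hQeval]
    apply cont_aeval
    intro j
    by_cases hj : j = i
    · simp only [hj, if_true]; exact continuous_const
    · simp only [hj, if_false]
      exact continuous_const.add (Complex.continuous_ofReal.mul continuous_const)
  -- monotonicity at ε = 0 by passing to the limit
  have hmono0 : ∀ x y₁ y₂ : ℝ, 0 ≤ y₂ → y₂ ≤ y₁ →
      ‖qC.eval (x + y₂ * Complex.I)‖ ≤
        ‖qC.eval (x + y₁ * Complex.I)‖ := by
    intro x y₁ y₂ h0 h12
    rw [← hQ0]
    have hten : ∀ b : ℂ, Filter.Tendsto (fun ε : ℝ => ‖(Q ε).eval b‖)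
        (nhdsWithin 0 (Set.Ioi 0)) (nhds (‖(Q 0).eval b‖)) := by
      intro b
      exact ((continuous_norm.comp (hcont b)).tendsto 0).mono_left nhdsWithin_le_nhds
    refine le_of_tendsto_of_tendsto (hten _) (hten _) ?_
    refine eventually_nhdsWithin_of_forall ?_
    intro ε hε
    exact abs_eval_mono (hstable ε hε) h0 h12
  -- no roots of qC in the open upper half plane
  have hupper : ∀ w : ℂ, 0 < w.im → qC.eval w ≠ 0 := by
    intro w hw hroot0
    have hvan : ∀ y' ∈ Set.Ioo (0 : ℝ) w.im, qC.eval ((w.re : ℂ) + y' * Complex.I) = 0 := by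
      intro y' hy'
      have h := hmono0 w.re w.im y' hy'.1.le hy'.2.le
      rw [Complex.re_add_im, hroot0] at h
      simp only [norm_zero] at h
      exact norm_eq_zero.mp (le_antisymm h (norm_nonneg _))
    have hsub : ((fun y' : ℝ => (w.re : ℂ) + y' * Complex.I) '' (Set.Ioo 0 w.im)) ⊆
        {b : ℂ | qC.IsRoot b} := by
      rintro b ⟨y', hy', rfl⟩
      exact hvan y' hy'
    have hinf : Set.Infinite {b : ℂ | qC.IsRoot b} := by
      refine Set.Infinite.mono hsub ?_
      apply Set.Infinite.image
      · intro a _ b _ hab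
        have := congrArg Complex.im hab
        simpa using this
      · exact Set.Ioo_infinite hw
    have : qC = 0 := Polynomial.eq_zero_of_infinite_isRoot qC hinf
    exact hqCne this
  -- complex roots of qC are real
  have hconj : ∀ w : ℂ, qC.eval w = 0 → qC.eval ((starRingEnd ℂ) w) = 0 := by
    intro w hw
    have h1 : (starRingEnd ℂ) (qC.eval w) = qC.eval ((starRingEnd ℂ) w) := by
      rw [hqC, Polynomial.eval_map, Polynomial.eval_map, Polynomial.hom_eval₂]
      congr 1
      ext r
      simp [Complex.conj_ofReal]
    rw [hw, map_zero] at h1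
    exact h1.symm
  have hreal : ∀ w ∈ qC.roots, w.im = 0 := by
    intro w hw
    have hw0 : qC.eval w = 0 := (Polynomial.mem_roots hqCne).mp hw
    have h1 : w.im ≤ 0 := by
      by_contra h
      exact hupper w (lt_of_not_ge h) hw0
    have h2 : 0 ≤ w.im := by
      by_contra h
      refine hupper ((starRingEnd ℂ) w) ?_ (hconj w hw0)
      simp only [Complex.conj_im]
      linarith [lt_of_not_ge h]
    linarith
  -- qR splits over ℝ
  have hsplitC : qC.Splits := IsAlgClosed.splits qC
  have hfacC := hsplitC.eq_prod_roots
  have hsplit : qR.Splits := by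
    rw [Polynomial.splits_iff_exists_multiset]
    refine ⟨qC.roots.map Complex.re, ?_⟩
    apply Polynomial.map_injective (algebraMap ℝ ℂ) (algebraMap ℝ ℂ).injective
    rw [Polynomial.map_mul, Polynomial.map_C, Polynomial.map_multiset_prod,
      Multiset.map_map, Multiset.map_map]
    have hlead : algebraMap ℝ ℂ (RingHom.id ℝ qR.leadingCoeff) = qC.leadingCoeff := by
      rw [hqC, Polynomial.leadingCoeff_map_of_injective (algebraMap ℝ ℂ).injective]
      rfl
    conv_lhs => rw [← hqC, hfacC]
    rw [show algebraMap ℝ ℂ qR.leadingCoeff = qC.leadingCoeff from hlead]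
    congr 1
    congr 1
    refine (Multiset.map_congr rfl ?_).symm
    intro w hw
    have hwre : ((w.re : ℂ)) = w := by
      apply Complex.ext
      · simp
      · simp [hreal w hw]
    simp [Function.comp, hwre]
  have hfacR := hsplit.eq_prod_roots
  have hroots_lt : ∀ r ∈ qR.roots, r < t₀ := by
    intro r hr
    by_contra h
    have h1 : t₀ ≤ r := le_of_not_gt h
    have h2 := hpos r h1
    have h3 : qR.eval r = 0 := (Polynomial.mem_roots hqRne).mp hr
    rw [h3] at h2
    exact lt_irrefl 0 h2
  obtain ⟨hFpos, hFineq⟩ := key_ineq t₀ qR.roots hroots_lt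
  -- derivative evaluations
  have heval' : ∀ p' : MvPolynomial (Fin m) ℝ,
      Polynomial.eval t₀ (subst i z p') = MvPolynomial.eval z p' := by
    intro p'
    rw [subst_eval, ht₀]
    rw [show (fun j => if j = i then z i else z j) = z from hzz, aeval_real]
  set F := ((qR.roots.map fun r => (X : ℝ[X]) - C r).prod) with hF
  set c := qR.leadingCoeff with hc
  have hD : (derivative qR).eval t₀ = MvPolynomial.eval z (MvPolynomial.pderiv i p) := by
    rw [hqR, subst_derivative, heval']
  have hB : (derivative (derivative qR)).eval t₀ =
      MvPolynomial.eval z (MvPolynomial.pderiv i (MvPolynomial.pderiv i p)) := by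
    rw [hqR, subst_derivative, subst_derivative, heval']
  -- relate qR to c • F
  have hq_eq : qR = C c * F := hfacR
  have hA_eq : MvPolynomial.eval z p = c * F.eval t₀ := by
    rw [← hqR_t₀, hq_eq]; simp
  have hD_eq : (derivative qR).eval t₀ = c * (derivative F).eval t₀ := by
    rw [hq_eq]; simp [derivative_mul]
  have hB_eq : (derivative (derivative qR)).eval t₀ =
      c * (derivative (derivative F)).eval t₀ := by
    rw [hq_eq]; simp [derivative_mul]
  have hc_pos : 0 < c := by
    have h := hA
    rw [hA_eq] at h
    nlinarith [hFpos, h]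
  have hAB : MvPolynomial.eval z p *
      MvPolynomial.eval z (MvPolynomial.pderiv i (MvPolynomial.pderiv i p)) ≤
      (MvPolynomial.eval z (MvPolynomial.pderiv i p)) ^ 2 := by
    rw [← hD, ← hB, hA_eq, hD_eq, hB_eq]
    nlinarith [hFineq, sq_nonneg c]
  rw [Psi, Phi, div_pow, div_le_div_iff₀ hA (pow_pos hA 2)]
  nlinarith [mul_le_mul_of_nonneg_right hAB hA.le, hA]
end
end

section
/- Let p ∈ ℝ[z_1,...,z_m] be real stable and let z ∈ ℝ^m be above all roots of p with Φ^i_p(z) < 1 for some i ≤ m. Then z is above all roots of the polynomial p − ∂²_{z_i} p, i.e. (p − ∂²_{z_i} p)(z + t) > 0 for every t ∈ ℝ^m with all coordinates ≥ 0. -/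
noncomputable section

open MvPolynomial

variable {m : ℕ}

lemma aeval_R (x : Fin m → ℝ) (q : MvPolynomial (Fin m) ℝ) :
    MvPolynomial.aeval x q = MvPolynomial.eval x q := by
  rw [aeval_def, Algebra.algebraMap_self]; rfl

lemma aeval_coe (x : Fin m → ℝ) (q : MvPolynomial (Fin m) ℝ) :
    MvPolynomial.aeval (fun j => ((x j : ℝ) : ℂ)) q = ((MvPolynomial.eval x q : ℝ) : ℂ) := by
  rw [← aeval_R x q]
  simpa using (MvPolynomial.comp_aeval_apply (f := x) Complex.ofRealAm q).symm

/-- chain rule along a line for MvPolynomial evaluation -/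
lemma hasDerivAt_aeval_line {K : Type*} [NontriviallyNormedField K] [NormedAlgebra ℝ K]
    (x v : Fin m → K) (p : MvPolynomial (Fin m) ℝ) (s : K) :
    HasDerivAt (fun u : K => MvPolynomial.aeval (fun j => x j + u * v j) p)
      (∑ j, v j * MvPolynomial.aeval (fun j => x j + s * v j) (MvPolynomial.pderiv j p)) s := by
  induction p using MvPolynomial.induction_on with
  | C a => simpa using hasDerivAt_const s ((algebraMap ℝ K) a)
  | add p q hp hq =>
      simp only [map_add, mul_add, Finset.sum_add_distrib]
      exact hp.add hq
  | mul_X p j hp =>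
      have hl : HasDerivAt (fun u : K => x j + u * v j) (v j) s := by
        simpa using ((hasDerivAt_id s).mul_const (v j)).const_add (x j)
      have h := hp.mul hl
      simp only [map_mul, aeval_X]
      refine h.congr_deriv ?_
      symm
      rw [Finset.sum_congr rfl (fun k _ => by
        rw [pderiv_mul, map_add, map_mul, map_mul, aeval_X, pderiv_X])]
      simp only [Pi.single_apply, apply_ite (MvPolynomial.aeval fun j => x j + s * v j),
        map_one, map_zero, mul_ite, mul_one, mul_zero, mul_add, ite_mul, zero_mul]
      simp only [Finset.sum_add_distrib, Finset.sum_ite_eq, Finset.mem_univ, if_true,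
        ← mul_assoc, ← Finset.sum_mul]
      ring

/-- derivative of a univariate specialization of an MvPolynomial. -/
lemma derivative_aeval_eq {K : Type*} [CommRing K] [Algebra ℝ K]
    (g : Fin m → Polynomial K) (c : Fin m → K)
    (hg : ∀ j, (g j).derivative = Polynomial.C (c j)) (p : MvPolynomial (Fin m) ℝ) :
    (MvPolynomial.aeval g p).derivative
      = ∑ j, Polynomial.C (c j) * MvPolynomial.aeval g (MvPolynomial.pderiv j p) := by
  induction p using MvPolynomial.induction_on with
  | C a =>
      simp [MvPolynomial.aeval_C, Polynomial.algebraMap_apply]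
  | add p q hp hq =>
      simp [map_add, Polynomial.derivative_add, hp, hq, mul_add, Finset.sum_add_distrib]
  | mul_X p j hp =>
      have hR : ∀ k : Fin m, MvPolynomial.pderiv k (p * MvPolynomial.X j)
          = MvPolynomial.pderiv k p * MvPolynomial.X j
            + p * (if j = k then 1 else 0) := by
        intro k; rw [pderiv_mul, pderiv_X]; simp [Pi.single_apply]
      rw [map_mul, aeval_X, Polynomial.derivative_mul, hp, hg j]
      simp only [hR, map_add, map_mul, aeval_X, apply_ite (MvPolynomial.aeval g), map_one,
        map_zero, mul_ite, mul_one, mul_zero, mul_add, Finset.sum_add_distrib,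
        Finset.sum_ite_eq, Finset.mem_univ, if_true, Finset.sum_mul]
      rw [Finset.sum_congr rfl (fun k _ => (mul_assoc (Polynomial.C (c k)) _ _).symm)]
      ring

/-- log-derivative of a polynomial nonvanishing on the upper half-plane maps UHP to
closed lower half-plane. -/
lemma lemB : ∀ (n : ℕ) (P : Polynomial ℂ), P.natDegree = n → P ≠ 0 →
    (∀ x : ℂ, 0 < x.im → P.eval x ≠ 0) → ∀ x0 : ℂ, 0 < x0.im →
    ((P.derivative.eval x0) / P.eval x0).im ≤ 0 := by
  intro n
  induction n with
  | zero =>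
      intro P h0 _ _ x0 _
      obtain ⟨c, rfl⟩ := Polynomial.natDegree_eq_zero.mp h0
      simp
  | succ n ih =>
      intro P hdeg hP0 hnv x0 hx0
      have hdpos : 0 < P.degree := by
        rw [Polynomial.degree_eq_natDegree hP0, hdeg]
        exact_mod_cast Nat.succ_pos n
      obtain ⟨α, hα⟩ := Complex.exists_root hdpos
      have hαim : α.im ≤ 0 := by
        by_contra h
        exact hnv α (lt_of_not_ge h) hα
      obtain ⟨Q, hQ⟩ := Polynomial.dvd_iff_isRoot.mpr hα
      have hQ0 : Q ≠ 0 := by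
        rintro rfl
        rw [mul_zero] at hQ
        exact hP0 hQ
      have hQdeg : Q.natDegree = n := by
        have h1 := Polynomial.natDegree_mul (Polynomial.X_sub_C_ne_zero α) hQ0
        rw [← hQ, hdeg, Polynomial.natDegree_X_sub_C] at h1
        omega
      have hQnv : ∀ x : ℂ, 0 < x.im → Q.eval x ≠ 0 := fun x hx hQx =>
        hnv x hx (by rw [hQ]; simp [hQx])
      have hPx0 : P.eval x0 ≠ 0 := hnv x0 hx0
      have hQx0 : Q.eval x0 ≠ 0 := hQnv x0 hx0
      have hx0α : x0 - α ≠ 0 := by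
        intro h
        rw [sub_eq_zero] at h
        subst h
        exact absurd hαim (not_le.mpr hx0)
      have key : P.derivative.eval x0 / P.eval x0
          = (x0 - α)⁻¹ + Q.derivative.eval x0 / Q.eval x0 := by
        rw [hQ]
        simp only [Polynomial.derivative_mul, Polynomial.eval_add, Polynomial.eval_mul,
          Polynomial.derivative_X_sub_C, Polynomial.eval_one, Polynomial.eval_sub,
          Polynomial.eval_X, Polynomial.eval_C, one_mul]
        field_simp
      rw [key, Complex.add_im]
      have h1 : ((x0 - α)⁻¹).im ≤ 0 := by
        rw [Complex.inv_im]
        apply div_nonpos_of_nonpos_of_nonneg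
        · simp only [Complex.sub_im, neg_nonpos]
          linarith
        · exact Complex.normSq_nonneg _
      exact add_nonpos h1 (ih Q hQdeg hQ0 hQnv x0 hx0)

/-- For a real-rooted polynomial positive on `[0, ∞)`:
the log-derivative at 0 is nonnegative, and `q q'' ≤ q'²` at 0. -/
lemma lemC : ∀ (n : ℕ) (q : Polynomial ℝ), q.natDegree = n →
    (∀ s : ℝ, 0 ≤ s → 0 < q.eval s) →
    (∀ α : ℂ, Polynomial.aeval α q = 0 → α.im = 0) →
    0 ≤ q.derivative.eval 0 ∧
      q.eval 0 * q.derivative.derivative.eval 0 ≤ (q.derivative.eval 0) ^ 2 := by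
  intro n
  induction n with
  | zero =>
      intro q h0 _ _
      obtain ⟨c, rfl⟩ := Polynomial.natDegree_eq_zero.mp h0
      simp
  | succ n ih =>
      intro q hdeg hpos hroots
      have hq0 : q ≠ 0 := fun h => by simpa [h] using hpos 0 le_rfl
      -- find a real root
      have hmdeg : (q.map (algebraMap ℝ ℂ)).natDegree = n + 1 := by
        rw [Polynomial.natDegree_map_eq_of_injective (algebraMap ℝ ℂ).injective, hdeg]
      have hm0 : q.map (algebraMap ℝ ℂ) ≠ 0 := by
        intro h
        rw [h] at hmdeg
        simp at hmdeg
      have hdpos : 0 < (q.map (algebraMap ℝ ℂ)).degree := by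
        rw [Polynomial.degree_eq_natDegree hm0, hmdeg]
        exact_mod_cast Nat.succ_pos n
      obtain ⟨α, hα⟩ := Complex.exists_root hdpos
      have hα' : Polynomial.aeval α q = 0 := by
        rwa [Polynomial.aeval_def, ← Polynomial.eval_map]
      have him : α.im = 0 := hroots α hα'
      set r : ℝ := α.re with hr
      have hαr : α = (r : ℂ) := Complex.ext rfl (by simp [him])
      have hqr : q.eval r = 0 := by
        have : Polynomial.aeval ((r : ℂ)) q = ((q.eval r : ℝ) : ℂ) := by
          rw [show ((r : ℂ)) = algebraMap ℝ ℂ r from rfl,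
            Polynomial.aeval_algebraMap_apply_eq_algebraMap_eval]
          rfl
        rw [hαr] at hα'
        rw [this] at hα'
        exact_mod_cast hα'
      have hrneg : r < 0 := by
        by_contra h
        exact absurd hqr (ne_of_gt (hpos r (not_lt.mp h)))
      obtain ⟨q₁, hfac⟩ := Polynomial.dvd_iff_isRoot.mpr hqr
      have hq₁0 : q₁ ≠ 0 := by
        rintro rfl
        rw [mul_zero] at hfac
        exact hq0 hfac
      have hq₁deg : q₁.natDegree = n := by
        have h1 := Polynomial.natDegree_mul (Polynomial.X_sub_C_ne_zero r) hq₁0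
        rw [← hfac, hdeg, Polynomial.natDegree_X_sub_C] at h1
        omega
      have hq₁pos : ∀ s : ℝ, 0 ≤ s → 0 < q₁.eval s := by
        intro s hs
        have h1 : 0 < (s - r) * q₁.eval s := by
          have := hpos s hs
          rw [hfac] at this
          simpa using this
        have h2 : 0 < s - r := by linarith
        nlinarith
      have hq₁roots : ∀ α : ℂ, Polynomial.aeval α q₁ = 0 → α.im = 0 := by
        intro β hβ
        apply hroots β
        rw [hfac, map_mul, hβ, mul_zero]
      obtain ⟨ihB, ihC⟩ := ih q₁ hq₁deg hq₁pos hq₁roots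
      -- arithmetic
      have hd1 : q.derivative = q₁ + (Polynomial.X - Polynomial.C r) * q₁.derivative := by
        rw [hfac, Polynomial.derivative_mul, Polynomial.derivative_X_sub_C, one_mul]
      have hd2 : q.derivative.derivative
          = 2 * q₁.derivative + (Polynomial.X - Polynomial.C r) * q₁.derivative.derivative := by
        rw [hd1, Polynomial.derivative_add, Polynomial.derivative_mul,
          Polynomial.derivative_X_sub_C, one_mul]
        ring
      set ρ : ℝ := -r with hρ
      have hρpos : 0 < ρ := by linarith
      have hA : 0 < q₁.eval 0 := hq₁pos 0 le_rfl
      set A := q₁.eval 0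
      set B := q₁.derivative.eval 0
      set Cc := q₁.derivative.derivative.eval 0
      have e0 : q.eval 0 = ρ * A := by rw [hfac]; simp [hρ]; exact Or.inl rfl
      have e1 : q.derivative.eval 0 = A + ρ * B := by rw [hd1]; simp [hρ]; rfl
      have e2 : q.derivative.derivative.eval 0 = 2 * B + ρ * Cc := by rw [hd2]; simp [hρ]; rfl
      rw [e0, e1, e2]
      constructor
      · nlinarith
      · nlinarith [mul_le_mul_of_nonneg_left ihC (sq_nonneg ρ), sq_nonneg A]

/-- The barrier of a real stable polynomial maps points with all coordinates in the open
upper half-plane into the closed lower half-plane. -/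
lemma lemE {m : ℕ} (p : MvPolynomial (Fin m) ℝ)
    (hp : ∀ z : Fin m → ℂ, (∀ i, 0 < (z i).im) → (MvPolynomial.aeval z) p ≠ 0)
    (i : Fin m) (x : Fin m → ℂ) (hx : ∀ j, 0 < (x j).im) :
    ((MvPolynomial.aeval x (MvPolynomial.pderiv i p)) / (MvPolynomial.aeval x p)).im ≤ 0 := by
  classical
  set g : Fin m → Polynomial ℂ :=
    fun j => if j = i then Polynomial.X else Polynomial.C (x j) with hg
  have ev : ∀ (q : MvPolynomial (Fin m) ℝ) (u : ℂ),
      (MvPolynomial.aeval g q).eval u = MvPolynomial.aeval (Function.update x i u) q := by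
    intro q u
    have h1 : ((Polynomial.aeval u).restrictScalars ℝ) (MvPolynomial.aeval g q)
        = MvPolynomial.aeval (fun j => ((Polynomial.aeval u).restrictScalars ℝ) (g j)) q :=
      MvPolynomial.comp_aeval_apply (f := g) ((Polynomial.aeval u).restrictScalars ℝ) q
    have h2 : (fun j => ((Polynomial.aeval u).restrictScalars ℝ) (g j))
        = Function.update x i u := by
      funext j
      by_cases h : j = i <;> simp [hg, h, Function.update_apply]
    rw [h2] at h1
    exact h1
  have evx : ∀ q : MvPolynomial (Fin m) ℝ,
      (MvPolynomial.aeval g q).eval (x i) = MvPolynomial.aeval x q := by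
    intro q
    rw [ev q (x i), Function.update_eq_self]
  set P : Polynomial ℂ := MvPolynomial.aeval g p with hP
  have hnv : ∀ u : ℂ, 0 < u.im → P.eval u ≠ 0 := by
    intro u hu
    rw [ev]
    apply hp
    intro j
    rcases eq_or_ne j i with rfl | h
    · simpa using hu
    · simpa [Function.update_apply, h] using hx j
  have hP0 : P ≠ 0 := by
    intro h
    apply hp x hx
    rw [← evx p, ← hP, h, Polynomial.eval_zero]
  have hder : P.derivative = MvPolynomial.aeval g (MvPolynomial.pderiv i p) := by
    rw [hP, derivative_aeval_eq g (fun j => if j = i then 1 else 0)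
      (fun j => by by_cases h : j = i <;> simp [hg, h])]
    rw [Finset.sum_congr rfl (fun k _ => by
      rw [apply_ite Polynomial.C, Polynomial.C_1, Polynomial.C_0, ite_mul, one_mul, zero_mul])]
    simp
  have := lemB P.natDegree P rfl hP0 hnv (x i) (hx i)
  rwa [hder, evx, evx] at this

open MvPolynomial
variable {m : ℕ}

/-- Pick-function argument: directional monotonicity of the barrier at real points,
strict direction version. -/
lemma pick_strict (p : MvPolynomial (Fin m) ℝ)
    (hp : ∀ z : Fin m → ℂ, (∀ i, 0 < (z i).im) → (MvPolynomial.aeval z) p ≠ 0)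
    (i : Fin m) (x u : Fin m → ℝ) (hx : MvPolynomial.eval x p ≠ 0) (hu : ∀ j, 0 < u j) :
    (∑ j, u j * MvPolynomial.eval x (MvPolynomial.pderiv j (MvPolynomial.pderiv i p)))
        * MvPolynomial.eval x p
      ≤ MvPolynomial.eval x (MvPolynomial.pderiv i p)
        * (∑ j, u j * MvPolynomial.eval x (MvPolynomial.pderiv j p)) := by
  classical
  set a : ℝ := MvPolynomial.eval x (MvPolynomial.pderiv i p) with ha
  set b : ℝ := MvPolynomial.eval x p with hb
  set r : ℝ := ∑ j, u j * MvPolynomial.eval x (MvPolynomial.pderiv j (MvPolynomial.pderiv i p))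
    with hrr
  set sS : ℝ := ∑ j, u j * MvPolynomial.eval x (MvPolynomial.pderiv j p) with hsS
  set vc : Fin m → ℂ := fun j => (u j : ℂ) * Complex.I with hvc
  set xc : Fin m → ℂ := fun j => ((x j : ℝ) : ℂ) with hxc
  -- the two complex curves
  set A : ℝ → ℂ := fun δ => MvPolynomial.aeval (fun j => xc j + (δ : ℂ) * vc j)
    (MvPolynomial.pderiv i p) with hA
  set B : ℝ → ℂ := fun δ => MvPolynomial.aeval (fun j => xc j + (δ : ℂ) * vc j) p with hB
  have hptzero : (fun j => xc j + (0 : ℂ) * vc j) = xc := by funext j; simp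
  -- derivatives of A and B at 0
  have derA : ∀ q : MvPolynomial (Fin m) ℝ, HasDerivAt
      (fun δ : ℝ => MvPolynomial.aeval (fun j => xc j + (δ : ℂ) * vc j) q)
      (Complex.I * ((∑ j, u j * MvPolynomial.eval x (MvPolynomial.pderiv j q) : ℝ) : ℂ)) 0 := by
    intro q
    have h1 := hasDerivAt_aeval_line xc vc q (0 : ℂ)
    have h2 := h1.comp_ofReal (z := (0 : ℝ))
    have h3 : (∑ j, vc j * MvPolynomial.aeval (fun k => xc k + (0 : ℂ) * vc k)
        (MvPolynomial.pderiv j q))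
        = Complex.I * ((∑ j, u j * MvPolynomial.eval x (MvPolynomial.pderiv j q) : ℝ) : ℂ) := by
      rw [hptzero]
      push_cast
      rw [Finset.mul_sum]
      refine Finset.sum_congr rfl fun j _ => ?_
      rw [hvc, aeval_coe]
      push_cast
      ring
    rw [h3] at h2
    exact_mod_cast h2
  have hA0 : A 0 = ((a : ℝ) : ℂ) := by rw [hA]; simp only [Complex.ofReal_zero, hptzero]; rw [aeval_coe]
  have hB0 : B 0 = ((b : ℝ) : ℂ) := by rw [hB]; simp only [Complex.ofReal_zero, hptzero]; rw [aeval_coe]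
  have hB0ne : B 0 ≠ 0 := by rw [hB0]; exact_mod_cast hx
  -- derivative of the quotient F = A / B at 0
  have hF : HasDerivAt (fun δ => A δ / B δ)
      ((Complex.I * ((r : ℝ) : ℂ) * B 0 - A 0 * (Complex.I * ((sS : ℝ) : ℂ))) / (B 0) ^ 2) 0 :=
    (derA (MvPolynomial.pderiv i p)).div (derA p) hB0ne
  set L : ℂ := (Complex.I * ((r : ℝ) : ℂ) * B 0 - A 0 * (Complex.I * ((sS : ℝ) : ℂ))) / (B 0) ^ 2
    with hL
  have hLim : L.im = (r * b - a * sS) / b ^ 2 := by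
    rw [hL, hA0, hB0]
    have : (Complex.I * ((r : ℝ) : ℂ) * ((b : ℝ) : ℂ) - ((a : ℝ) : ℂ) * (Complex.I * ((sS : ℝ) : ℂ)))
        / (((b : ℝ) : ℂ)) ^ 2 = Complex.I * (((r * b - a * sS) / b ^ 2 : ℝ) : ℂ) := by
      push_cast
      have hbne : ((b : ℝ) : ℂ) ≠ 0 := by exact_mod_cast hx
      field_simp
    rw [this]
    rw [Complex.mul_im]
    simp
    norm_cast
  -- Im F(δ) ≤ 0 for δ > 0
  have hFim : ∀ δ : ℝ, 0 < δ → ((A δ / B δ)).im ≤ 0 := by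
    intro δ hδ
    apply lemE p hp i
    intro j
    show 0 < (xc j + (δ : ℂ) * vc j).im
    have him : (xc j + (δ : ℂ) * vc j).im = δ * u j := by
      simp [hxc, hvc]
    rw [him]
    exact mul_pos hδ (hu j)
  -- slope limit
  have hslope := hasDerivAt_iff_tendsto_slope.mp hF
  have htend : Filter.Tendsto (fun δ : ℝ => (slope (fun δ => A δ / B δ) 0 δ).im)
      (nhdsWithin 0 (Set.Ioi 0)) (nhds L.im) := by
    apply Filter.Tendsto.comp (Complex.continuous_im.tendsto L)
    exact hslope.mono_left (nhdsWithin_mono 0 (fun y hy => ne_of_gt hy))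
  have hev : ∀ᶠ δ in nhdsWithin (0:ℝ) (Set.Ioi 0),
      (slope (fun δ => A δ / B δ) 0 δ).im ≤ 0 := by
    apply eventually_nhdsWithin_of_forall
    intro δ hδ
    have hδ' : (0:ℝ) < δ := hδ
    have him0 : (A 0 / B 0).im = 0 := by
      rw [hA0, hB0, ← Complex.ofReal_div]
      simp
    simp only [slope, vsub_eq_sub, sub_zero]
    rw [Complex.smul_im, Complex.sub_im, him0, sub_zero]
    exact mul_nonpos_of_nonneg_of_nonpos (inv_nonneg.mpr hδ'.le) (hFim δ hδ')
  have : L.im ≤ 0 := le_of_tendsto htend hev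
  rw [hLim] at this
  have hb2 : (0:ℝ) < b ^ 2 := by positivity
  have h9 : r * b - a * sS = ((r * b - a * sS) / b ^ 2) * b ^ 2 := by field_simp
  nlinarith [mul_nonpos_of_nonpos_of_nonneg this hb2.le]



open MvPolynomial
variable {m : ℕ}

lemma nonneg_limit {f : ℝ → ℝ} (hf : Continuous f) (h : ∀ ε : ℝ, 0 < ε → 0 ≤ f ε) :
    0 ≤ f 0 :=
  ge_of_tendsto ((hf.tendsto 0).mono_left (nhdsWithin_le_nhds (s := Set.Ioi 0)))
    (eventually_nhdsWithin_of_forall fun x hx => h x hx)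

/-- limit version of `pick_strict`, for nonnegative directions -/
lemma pick_mono (p : MvPolynomial (Fin m) ℝ)
    (hp : ∀ z : Fin m → ℂ, (∀ i, 0 < (z i).im) → (MvPolynomial.aeval z) p ≠ 0)
    (i : Fin m) (x t : Fin m → ℝ) (hx : MvPolynomial.eval x p ≠ 0) (ht : ∀ j, 0 ≤ t j) :
    (∑ j, t j * MvPolynomial.eval x (MvPolynomial.pderiv j (MvPolynomial.pderiv i p)))
        * MvPolynomial.eval x p
      ≤ MvPolynomial.eval x (MvPolynomial.pderiv i p)
        * (∑ j, t j * MvPolynomial.eval x (MvPolynomial.pderiv j p)) := by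
  set M : Fin m → ℝ := fun j => MvPolynomial.eval x (MvPolynomial.pderiv j (MvPolynomial.pderiv i p))
  set N : Fin m → ℝ := fun j => MvPolynomial.eval x (MvPolynomial.pderiv j p)
  set a : ℝ := MvPolynomial.eval x (MvPolynomial.pderiv i p)
  set b : ℝ := MvPolynomial.eval x p
  set f : ℝ → ℝ := fun ε => a * (∑ j, (t j + ε) * N j) - (∑ j, (t j + ε) * M j) * b with hf
  have key : ∀ ε : ℝ, 0 < ε → 0 ≤ f ε := by
    intro ε hε
    have h := pick_strict p hp i x (fun j => t j + ε) hx (fun j => show 0 < t j + ε by linarith [ht j])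
    simp only [hf]
    linarith
  have hcont : Continuous f := by
    apply Continuous.sub
    · exact continuous_const.mul (continuous_finset_sum _ fun j _ =>
        (continuous_const.add continuous_id).mul continuous_const)
    · exact (continuous_finset_sum _ fun j _ =>
        (continuous_const.add continuous_id).mul continuous_const).mul continuous_const
  have h0 := nonneg_limit hcont key
  simp only [hf, add_zero] at h0
  linarith

/-- one-direction second-derivative bound from real-rootedness of restrictions -/
lemma dir_bound (p : MvPolynomial (Fin m) ℝ)
    (hp : ∀ z : Fin m → ℂ, (∀ i, 0 < (z i).im) → (MvPolynomial.aeval z) p ≠ 0)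
    (x v : Fin m → ℝ) (hv : ∀ j, 0 < v j)
    (hpos : ∀ s : ℝ, 0 ≤ s → 0 < MvPolynomial.eval (fun j => x j + s * v j) p) :
    0 ≤ (∑ j, v j * MvPolynomial.eval x (MvPolynomial.pderiv j p)) ∧
      MvPolynomial.eval x p *
          (∑ j, v j * ∑ k, v k * MvPolynomial.eval x
            (MvPolynomial.pderiv k (MvPolynomial.pderiv j p)))
        ≤ (∑ j, v j * MvPolynomial.eval x (MvPolynomial.pderiv j p)) ^ 2 := by
  classical
  set g : Fin m → Polynomial ℝ :=
    fun j => Polynomial.C (x j) + Polynomial.C (v j) * Polynomial.X with hg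
  set q : Polynomial ℝ := MvPolynomial.aeval g p with hq
  have evs : ∀ (r : MvPolynomial (Fin m) ℝ) (s : ℝ),
      (MvPolynomial.aeval g r).eval s = MvPolynomial.eval (fun j => x j + s * v j) r := by
    intro r s
    have h1 := MvPolynomial.comp_aeval_apply (f := g) ((Polynomial.aeval s).restrictScalars ℝ) r
    have h2 : (fun j => ((Polynomial.aeval s).restrictScalars ℝ) (g j))
        = (fun j => x j + s * v j) := by
      funext j
      simp [hg]
      ring
    have h3 : ((Polynomial.aeval s).restrictScalars ℝ) (MvPolynomial.aeval g r)
        = (MvPolynomial.aeval g r).eval s := by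
      simp [Polynomial.coe_aeval_eq_eval]
    rw [h3, h2] at h1
    rw [h1, aeval_R]
  have hposq : ∀ s : ℝ, 0 ≤ s → 0 < q.eval s := by
    intro s hs
    rw [hq, evs]
    exact hpos s hs
  have hroots : ∀ α : ℂ, Polynomial.aeval α q = 0 → α.im = 0 := by
    intro α hα
    have key : ∀ β : ℂ, 0 < β.im → Polynomial.aeval β q ≠ 0 := by
      intro β hβ
      have h1 := MvPolynomial.comp_aeval_apply (f := g)
        (Polynomial.aeval β : Polynomial ℝ →ₐ[ℝ] ℂ) p
      have h2 : (fun j => (Polynomial.aeval β) (g j))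
          = (fun j => ((x j : ℂ)) + ((v j : ℂ)) * β) := by
        funext j
        simp [hg]
      rw [h2] at h1
      rw [hq, h1]
      apply hp
      intro j
      have : (((x j : ℂ)) + ((v j : ℂ)) * β).im = v j * β.im := by
        simp
      rw [this]
      exact mul_pos (hv j) hβ
    by_contra him
    rcases lt_or_gt_of_ne him with hlt | hgt
    · have hc := Polynomial.aeval_conj q α
      rw [hα, map_zero] at hc
      exact key ((starRingEnd ℂ) α) (by simpa using neg_pos.mpr hlt) hc
    · exact key α hgt hα
  obtain ⟨c1, c2⟩ := lemC q.natDegree q rfl hposq hroots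
  have hpt0 : (fun j => x j + (0:ℝ) * v j) = x := by funext j; simp
  have hder : q.derivative = ∑ j, Polynomial.C (v j) * MvPolynomial.aeval g
      (MvPolynomial.pderiv j p) :=
    derivative_aeval_eq g v (fun j => by simp [hg]) p
  have hder2 : q.derivative.derivative = ∑ j, Polynomial.C (v j) *
      ∑ k, Polynomial.C (v k) * MvPolynomial.aeval g
        (MvPolynomial.pderiv k (MvPolynomial.pderiv j p)) := by
    rw [hder, Polynomial.derivative_sum]
    refine Finset.sum_congr rfl fun j _ => ?_
    rw [Polynomial.derivative_C_mul,
      derivative_aeval_eq g v (fun j => by simp [hg]) (MvPolynomial.pderiv j p)]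
  have e1 : q.derivative.eval 0 = ∑ j, v j * MvPolynomial.eval x (MvPolynomial.pderiv j p) := by
    rw [hder]
    simp only [Polynomial.eval_finset_sum, Polynomial.eval_mul, Polynomial.eval_C, evs, hpt0]
  have e2 : q.derivative.derivative.eval 0
      = ∑ j, v j * ∑ k, v k * MvPolynomial.eval x
          (MvPolynomial.pderiv k (MvPolynomial.pderiv j p)) := by
    rw [hder2]
    simp only [Polynomial.eval_finset_sum, Polynomial.eval_mul, Polynomial.eval_C, evs, hpt0]
  have e0 : q.eval 0 = MvPolynomial.eval x p := by rw [hq, evs, hpt0]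
  rw [e1] at c1
  rw [e0, e1, e2] at c2
  exact ⟨c1, c2⟩



open MvPolynomial
variable {m : ℕ}

/-- second-derivative bound at a point above the roots -/
lemma secondDeriv_bound (p : MvPolynomial (Fin m) ℝ)
    (hp : ∀ z : Fin m → ℂ, (∀ i, 0 < (z i).im) → (MvPolynomial.aeval z) p ≠ 0)
    (i : Fin m) (x : Fin m → ℝ)
    (hpos : ∀ t : Fin m → ℝ, (∀ j, 0 ≤ t j) → 0 < MvPolynomial.eval (x + t) p) :
    0 ≤ MvPolynomial.eval x (MvPolynomial.pderiv i p) ∧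
      MvPolynomial.eval x p * MvPolynomial.eval x (MvPolynomial.pderiv i (MvPolynomial.pderiv i p))
        ≤ (MvPolynomial.eval x (MvPolynomial.pderiv i p)) ^ 2 := by
  classical
  set N : Fin m → ℝ := fun j => MvPolynomial.eval x (MvPolynomial.pderiv j p) with hN
  set M : Fin m → Fin m → ℝ := fun j k => MvPolynomial.eval x
    (MvPolynomial.pderiv k (MvPolynomial.pderiv j p)) with hM
  set w : ℝ → Fin m → ℝ := fun ε j => (if j = i then (1:ℝ) else 0) + ε with hw
  have hbound : ∀ ε : ℝ, 0 < ε →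
      0 ≤ (∑ j, w ε j * N j) ∧
      MvPolynomial.eval x p * (∑ j, w ε j * ∑ k, w ε k * M j k) ≤ (∑ j, w ε j * N j) ^ 2 := by
    intro ε hε
    apply dir_bound p hp x (w ε)
    · intro j
      rw [hw]
      by_cases h : j = i <;> simp [h] <;> linarith
    · intro s hs
      have h1 : ∀ j, 0 ≤ s * w ε j := by
        intro j
        apply mul_nonneg hs
        rw [hw]
        by_cases h : j = i <;> simp [h] <;> linarith
      have h2 := hpos (fun j => s * w ε j) h1
      have h3 : (fun j => x j + s * w ε j) = x + fun j => s * w ε j := by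
        funext j
        simp
      rw [h3]
      exact h2
  have hf1cont : Continuous (fun ε : ℝ => ∑ j, w ε j * N j) := by
    apply continuous_finset_sum
    intro j _
    exact ((continuous_const.add continuous_id).mul continuous_const)
  have hf2cont : Continuous (fun ε : ℝ =>
      MvPolynomial.eval x p * (∑ j, w ε j * ∑ k, w ε k * M j k)) := by
    apply continuous_const.mul
    apply continuous_finset_sum
    intro j _
    exact ((continuous_const.add continuous_id).mul
      (continuous_finset_sum _ fun k _ => (continuous_const.add continuous_id).mul
        continuous_const))
  have hsum0 : (∑ j, w 0 j * N j) = N i := by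
    simp only [hw, add_zero, ite_mul, one_mul, zero_mul]
    rw [Finset.sum_ite_eq' Finset.univ i N]
    simp
  have hsum0' : (∑ j, w 0 j * ∑ k, w 0 k * M j k) = M i i := by
    have hin : ∀ j, (∑ k, w 0 k * M j k) = M j i := by
      intro j
      simp only [hw, add_zero, ite_mul, one_mul, zero_mul]
      rw [Finset.sum_ite_eq' Finset.univ i (M j)]
      simp
    rw [Finset.sum_congr rfl fun j _ => by rw [hin j]]
    simp only [hw, add_zero, ite_mul, one_mul, zero_mul]
    rw [Finset.sum_ite_eq' Finset.univ i (fun j => M j i)]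
    simp
  constructor
  · have := nonneg_limit hf1cont (fun ε hε => (hbound ε hε).1)
    rwa [hsum0] at this
  · have key := nonneg_limit (f := fun ε : ℝ => (∑ j, w ε j * N j) ^ 2 -
        MvPolynomial.eval x p * (∑ j, w ε j * ∑ k, w ε k * M j k))
      ((hf1cont.pow 2).sub hf2cont)
      (fun ε hε => sub_nonneg.mpr (hbound ε hε).2)
    simp only [hsum0, hsum0'] at key
    have : M i i = MvPolynomial.eval x (MvPolynomial.pderiv i (MvPolynomial.pderiv i p)) := rfl
    rw [this] at key
    linarith

/-- monotonicity of the barrier function -/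
lemma phi_mono (p : MvPolynomial (Fin m) ℝ)
    (hp : ∀ z : Fin m → ℂ, (∀ i, 0 < (z i).im) → (MvPolynomial.aeval z) p ≠ 0)
    (i : Fin m) (z : Fin m → ℝ)
    (hz : ∀ t : Fin m → ℝ, (∀ j, 0 ≤ t j) → 0 < MvPolynomial.eval (z + t) p)
    (t : Fin m → ℝ) (ht : ∀ j, 0 ≤ t j) :
    MvPolynomial.eval (z + t) (MvPolynomial.pderiv i p) / MvPolynomial.eval (z + t) p
      ≤ MvPolynomial.eval z (MvPolynomial.pderiv i p) / MvPolynomial.eval z p := by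
  set pt : ℝ → (Fin m → ℝ) := fun s j => z j + s * t j with hpt
  have hD : ∀ s : ℝ, 0 ≤ s → 0 < MvPolynomial.eval (pt s) p := by
    intro s hs
    have h2 := hz (fun j => s * t j) (fun j => mul_nonneg hs (ht j))
    have h3 : pt s = z + fun j => s * t j := by funext j; simp [hpt]
    rw [h3]
    exact h2
  have hN : ∀ (q : MvPolynomial (Fin m) ℝ) (s : ℝ),
      HasDerivAt (fun s : ℝ => MvPolynomial.eval (pt s) q)
        (∑ j, t j * MvPolynomial.eval (pt s) (MvPolynomial.pderiv j q)) s := by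
    intro q s
    have h := hasDerivAt_aeval_line (K := ℝ) z t q s
    simp only [aeval_R] at h
    exact h
  set φf : ℝ → ℝ := fun s => MvPolynomial.eval (pt s) (MvPolynomial.pderiv i p) /
    MvPolynomial.eval (pt s) p with hφf
  have hder : ∀ s : ℝ, 0 ≤ s → HasDerivAt φf
      (((∑ j, t j * MvPolynomial.eval (pt s) (MvPolynomial.pderiv j (MvPolynomial.pderiv i p))) *
          MvPolynomial.eval (pt s) p -
        MvPolynomial.eval (pt s) (MvPolynomial.pderiv i p) *
          (∑ j, t j * MvPolynomial.eval (pt s) (MvPolynomial.pderiv j p))) /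
        (MvPolynomial.eval (pt s) p) ^ 2) s :=
    fun s hs => (hN (MvPolynomial.pderiv i p) s).div (hN p s) (ne_of_gt (hD s hs))
  have hanti : AntitoneOn φf (Set.Icc 0 1) := by
    apply antitoneOn_of_deriv_nonpos (convex_Icc 0 1)
    · intro s hs
      exact (hder s hs.1).continuousAt.continuousWithinAt
    · intro s hs
      rw [interior_Icc] at hs
      exact ((hder s hs.1.le).differentiableAt).differentiableWithinAt
    · intro s hs
      rw [interior_Icc] at hs
      rw [(hder s hs.1.le).deriv]
      apply div_nonpos_of_nonpos_of_nonneg _ (sq_nonneg _)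
      have h := pick_mono p hp i (pt s) t (ne_of_gt (hD s hs.1.le)) ht
      linarith
  have h01 := hanti (Set.mem_Icc.mpr ⟨le_rfl, zero_le_one⟩)
    (Set.mem_Icc.mpr ⟨zero_le_one, le_rfl⟩) zero_le_one
  have e0 : pt 0 = z := by funext j; simp [hpt]
  have e1 : pt 1 = z + t := by funext j; simp [hpt]
  simpa [hφf, e0, e1] using h01



/-- If `p` is real stable, `z` is above all roots of `p`, and `Φ^i_p(z) < 1`, then `z` is
above all roots of `p − ∂²_{z_i} p`. -/
theorem stmt16 {m : ℕ} (p : MvPolynomial (Fin m) ℝ) (hp : RealStable p)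
    (z : Fin m → ℝ) (hz : AboveRoots p z) (i : Fin m) (hΦ : Phi p i z < 1) :
    AboveRoots (p - MvPolynomial.pderiv i (MvPolynomial.pderiv i p)) z := by
  intro t ht
  set w : Fin m → ℝ := z + t with hwdef
  have hD0 : 0 < MvPolynomial.eval w p := hz t ht
  have hposw : ∀ t' : Fin m → ℝ, (∀ j, 0 ≤ t' j) → 0 < MvPolynomial.eval (w + t') p := by
    intro t' ht'
    have hw' : w + t' = z + (t + t') := by
      funext j
      simp [hwdef]
      ring
    rw [hw']
    exact hz (t + t') (fun j => by
      have h1 := ht j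
      have h2 := ht' j
      simp only [Pi.add_apply]
      linarith)
  obtain ⟨h1, h2⟩ := secondDeriv_bound p hp i w hposw
  have hmono := phi_mono p hp i z hz t ht
  simp only [Phi] at hΦ
  have hlt : MvPolynomial.eval w (MvPolynomial.pderiv i p) / MvPolynomial.eval w p < 1 :=
    lt_of_le_of_lt hmono hΦ
  have hlt' : MvPolynomial.eval w (MvPolynomial.pderiv i p) < MvPolynomial.eval w p :=
    (div_lt_one hD0).mp hlt
  rw [map_sub]
  have h3 : (MvPolynomial.eval w (MvPolynomial.pderiv i p)) ^ 2 < (MvPolynomial.eval w p) ^ 2 := by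
    nlinarith
  nlinarith

end
end
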